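/- arXiv:2307.03622 — 5 statements merged into one kernel-verified Lean document; each statement's English description precedes it below -/
import Mathlib

section
/- Let X be a real Banach space. The norm of the dual space X* is non rough if and only if X has the Ball Dentable Property (BDP). -/
open Metric NormedSpace ENNReal

section Defs

variable (Z : Type*) [NormedAddCommGroup Z] [NormedSpace ℝ Z]

/-- The w*-slice of the closed unit ball of the dual of `Z` determined by `z : Z` and `α > 0`:
`S(B_{Z*}, z, α) = {f ∈ B_{Z*} : f(z) > sup_{g ∈ B_{Z*}} g(z) − α}`. -/
def wStarSlice (z : Z) (α : ℝ) : Set (StrongDual ℝ Z) :=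
  {f | f ∈ closedBall (0 : StrongDual ℝ Z) 1 ∧
    f z > sSup ((fun g : StrongDual ℝ Z => g z) '' closedBall (0 : StrongDual ℝ Z) 1) - α}

/-- The norm of `Z` is `ε`-rough: every w*-slice of `B_{Z*}` has diameter at least `ε`. -/
def EpsRough (ε : ℝ) : Prop :=
  ∀ (z : Z) (α : ℝ), 0 < α → ε ≤ diam (wStarSlice Z z α)

/-- The norm of `Z` is non rough: it is not `ε`-rough for any `ε > 0`. -/
def NonRough : Prop := ∀ ε > 0, ¬ EpsRough Z ε

/-- `Z*` has the w*-Ball Dentable Property. -/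
def WStarBDP : Prop :=
  ∀ ε > 0, ∃ (z : Z) (α : ℝ), 0 < α ∧ diam (wStarSlice Z z α) < ε

/-- `V` is a (relatively) w*-open subset of the closed unit ball `B_{Z*}`. -/
def IsRelWStarOpen (V : Set (StrongDual ℝ Z)) : Prop :=
  ∃ U : Set (WeakDual ℝ Z), IsOpen U ∧
    V = {f | f ∈ closedBall (0 : StrongDual ℝ Z) 1 ∧ StrongDual.toWeakDual f ∈ U}

/-- The norm of `Z` is weakly `ε`-average rough: every nonempty relatively w*-open
subset of `B_{Z*}` has diameter at least `ε`. -/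
def WeaklyEpsAvgRough (ε : ℝ) : Prop :=
  ∀ V : Set (StrongDual ℝ Z), IsRelWStarOpen Z V → V.Nonempty → ε ≤ diam V

/-- The norm of `Z` is weakly average non rough. -/
def WeaklyAvgNonRough : Prop := ∀ ε > 0, ¬ WeaklyEpsAvgRough Z ε

/-- `Z*` has the w*-Ball Huskable Property. -/
def WStarBHP : Prop :=
  ∀ ε > 0, ∃ V : Set (StrongDual ℝ Z), IsRelWStarOpen Z V ∧ V.Nonempty ∧ diam V < ε

/-- `D` is a convex combination of w*-slices of `B_{Z*}`, i.e. `D = ∑ λᵢ Sᵢ` (Minkowski sum)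
with each `Sᵢ` a w*-slice, `λᵢ > 0`, `∑ λᵢ = 1`. -/
def IsConvexCombWStarSlices (D : Set (StrongDual ℝ Z)) : Prop :=
  ∃ (n : ℕ) (l : Fin n → ℝ) (z : Fin n → Z) (α : Fin n → ℝ),
    (∀ i, 0 < l i) ∧ (∑ i, l i) = 1 ∧ (∀ i, 0 < α i) ∧
    D = {f | ∃ g : Fin n → StrongDual ℝ Z,
      (∀ i, g i ∈ wStarSlice Z (z i) (α i)) ∧ f = ∑ i, l i • g i}

/-- The norm of `Z` is `ε`-average rough: every convex combination of w*-slices of `B_{Z*}`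
has diameter at least `ε`. -/
def EpsAvgRough (ε : ℝ) : Prop :=
  ∀ D : Set (StrongDual ℝ Z), IsConvexCombWStarSlices Z D → ε ≤ diam D

/-- The norm of `Z` is average non rough. -/
def AvgNonRough : Prop := ∀ ε > 0, ¬ EpsAvgRough Z ε

/-- `Z*` has the w*-Ball Small Combination of Slice Property. -/
def WStarBSCSP : Prop :=
  ∀ ε > 0, ∃ D : Set (StrongDual ℝ Z), IsConvexCombWStarSlices Z D ∧ diam D < ε

/-- A slice of the closed unit ball `B_Z` determined by `f ∈ Z*` and `α > 0`. -/
def ballSlice (f : StrongDual ℝ Z) (α : ℝ) : Set Z :=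
  {x | x ∈ closedBall (0 : Z) 1 ∧ f x > sSup (f '' closedBall (0 : Z) 1) - α}

/-- `Z` has the Ball Dentable Property. -/
def BDP : Prop :=
  ∀ ε > 0, ∃ (f : StrongDual ℝ Z) (α : ℝ), 0 < α ∧ diam (ballSlice Z f α) < ε

/-- `V` is a nonempty relatively weakly open subset of the closed unit ball `B_Z`. -/
def IsRelWeakOpen (V : Set Z) : Prop :=
  ∃ U : Set (WeakSpace ℝ Z), IsOpen U ∧
    V = {x | x ∈ closedBall (0 : Z) 1 ∧ toWeakSpace ℝ Z x ∈ U}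

/-- `Z` has the Ball Huskable Property. -/
def BHP : Prop :=
  ∀ ε > 0, ∃ V : Set Z, IsRelWeakOpen Z V ∧ V.Nonempty ∧ diam V < ε

/-- `D` is a convex combination of slices of `B_Z`. -/
def IsConvexCombSlices (D : Set Z) : Prop :=
  ∃ (n : ℕ) (l : Fin n → ℝ) (f : Fin n → StrongDual ℝ Z) (α : Fin n → ℝ),
    (∀ i, 0 < l i) ∧ (∑ i, l i) = 1 ∧ (∀ i, 0 < α i) ∧
    D = {x | ∃ g : Fin n → Z,
      (∀ i, g i ∈ ballSlice Z (f i) (α i)) ∧ x = ∑ i, l i • g i}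

/-- `Z` has the Ball Small Combination of Slice Property. -/
def BSCSP : Prop :=
  ∀ ε > 0, ∃ D : Set Z, IsConvexCombSlices Z D ∧ diam D < ε

variable {Z}

/-- The closed unit ball of a subspace `F` of the dual, viewed as a subset of the dual. -/
def subBall (F : Submodule ℝ (StrongDual ℝ Z)) : Set (StrongDual ℝ Z) :=
  {f | f ∈ F ∧ ‖f‖ ≤ 1}

/-- The w*-slice of `B_F` determined by `z : Z` and `α`. -/
def subWStarSlice (F : Submodule ℝ (StrongDual ℝ Z)) (z : Z) (α : ℝ) : Set (StrongDual ℝ Z) :=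
  {f | f ∈ subBall F ∧ f z > sSup ((fun g : StrongDual ℝ Z => g z) '' subBall F) - α}

/-- The subspace `F` of `Z*` has the w*-Ball Dentable Property. -/
def SubWStarBDP (F : Submodule ℝ (StrongDual ℝ Z)) : Prop :=
  ∀ ε > 0, ∃ (z : Z) (α : ℝ), 0 < α ∧ diam (subWStarSlice F z α) < ε

/-- `V` is a relatively w*-open subset of `B_F`. -/
def IsRelWStarOpenSub (F : Submodule ℝ (StrongDual ℝ Z)) (V : Set (StrongDual ℝ Z)) : Prop :=
  ∃ U : Set (WeakDual ℝ Z), IsOpen U ∧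
    V = {f | f ∈ subBall F ∧ StrongDual.toWeakDual f ∈ U}

/-- The subspace `F` of `Z*` has the w*-Ball Huskable Property. -/
def SubWStarBHP (F : Submodule ℝ (StrongDual ℝ Z)) : Prop :=
  ∀ ε > 0, ∃ V : Set (StrongDual ℝ Z), IsRelWStarOpenSub F V ∧ V.Nonempty ∧ diam V < ε

/-- `D` is a convex combination of w*-slices of `B_F`. -/
def IsConvexCombSubWStarSlices (F : Submodule ℝ (StrongDual ℝ Z)) (D : Set (StrongDual ℝ Z)) : Prop :=
  ∃ (n : ℕ) (l : Fin n → ℝ) (z : Fin n → Z) (α : Fin n → ℝ),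
    (∀ i, 0 < l i) ∧ (∑ i, l i) = 1 ∧ (∀ i, 0 < α i) ∧
    D = {f | ∃ g : Fin n → StrongDual ℝ Z,
      (∀ i, g i ∈ subWStarSlice F (z i) (α i)) ∧ f = ∑ i, l i • g i}

/-- The subspace `F` of `Z*` has the w*-Ball Small Combination of Slice Property. -/
def SubWStarBSCSP (F : Submodule ℝ (StrongDual ℝ Z)) : Prop :=
  ∀ ε > 0, ∃ D : Set (StrongDual ℝ Z), IsConvexCombSubWStarSlices F D ∧ diam D < ε

/-- The annihilator `Y^⊥ = {f ∈ Z* : f(y) = 0 for all y ∈ Y}` of a subspace `Y` of `Z`. -/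
noncomputable def annih (Y : Submodule ℝ Z) : Submodule ℝ (StrongDual ℝ Z) where
  carrier := {f | ∀ y ∈ Y, f y = 0}
  add_mem' := by intro f g hf hg y hy; simp [hf y hy, hg y hy]
  zero_mem' := by intro y hy; simp
  smul_mem' := by intro c f hf y hy; simp [hf y hy]

end Defs

section MyHelly


variable {W : Type*} [NormedAddCommGroup W] [NormedSpace ℝ W]

/-- sup of a functional over the closed unit ball equals its norm. -/
lemma sSup_apply_closedBall (φ : StrongDual ℝ W) :
    sSup ((fun w => φ w) '' closedBall (0 : W) 1) = ‖φ‖ := by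
  have hne : ((fun w => φ w) '' closedBall (0 : W) 1).Nonempty :=
    ⟨φ 0, 0, by simp, rfl⟩
  have hbdd : ∀ y ∈ (fun w => φ w) '' closedBall (0 : W) 1, y ≤ ‖φ‖ := by
    rintro - ⟨x, hx, rfl⟩
    calc φ x ≤ ‖φ x‖ := le_abs_self _
    _ ≤ ‖φ‖ * ‖x‖ := φ.le_opNorm x
    _ ≤ ‖φ‖ * 1 := by
        have := mem_closedBall_zero_iff.1 hx
        nlinarith [norm_nonneg φ]
    _ = ‖φ‖ := mul_one _
  refine le_antisymm (csSup_le hne hbdd) ?_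
  refine le_of_forall_lt fun c hc => ?_
  obtain ⟨x, hx, hcx⟩ := φ.exists_lt_apply_of_lt_opNorm hc
  have hx1 : x ∈ closedBall (0 : W) 1 := by
    simpa [mem_closedBall_zero_iff] using hx.le
  rcases le_or_gt 0 (φ x) with h | h
  · have : c < φ x := by rwa [Real.norm_eq_abs, abs_of_nonneg h] at hcx
    exact lt_csSup_of_lt ⟨‖φ‖, fun y hy => hbdd y hy⟩ ⟨x, hx1, rfl⟩ this
  · have : c < φ (-x) := by
      rw [map_neg]
      rwa [Real.norm_eq_abs, abs_of_neg h] at hcx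
    refine lt_csSup_of_lt ⟨‖φ‖, fun y hy => hbdd y hy⟩ ⟨-x, ?_, rfl⟩ this
    simpa [mem_closedBall_zero_iff] using hx1

lemma bddAbove_apply_closedBall (φ : StrongDual ℝ W) :
    BddAbove ((fun w => φ w) '' closedBall (0 : W) 1) := by
  refine ⟨‖φ‖, ?_⟩
  rintro - ⟨x, hx, rfl⟩
  calc φ x ≤ ‖φ x‖ := le_abs_self _
  _ ≤ ‖φ‖ * ‖x‖ := φ.le_opNorm x
  _ ≤ ‖φ‖ * 1 := by
      have := mem_closedBall_zero_iff.1 hx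
      nlinarith [norm_nonneg φ]
  _ = ‖φ‖ := mul_one _

variable {X : Type*} [NormedAddCommGroup X] [NormedSpace ℝ X]

/-- Helly-type lemma: a bidual element of norm ≤ 1 can be approximated on two
functionals by elements of the unit ball. -/
lemma helly (F : StrongDual ℝ (StrongDual ℝ X)) (hF : ‖F‖ ≤ 1) (f g : StrongDual ℝ X) {δ : ℝ} (hδ : 0 < δ) :
    ∃ x : X, ‖x‖ ≤ 1 ∧ |f x - F f| < δ ∧ |g x - F g| < δ := by
  set T : X →L[ℝ] ℝ × ℝ := f.prod g with hT
  set K : Set (ℝ × ℝ) := closure (T '' closedBall (0 : X) 1) with hK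
  have hKconv : Convex ℝ K :=
    ((convex_closedBall (0 : X) 1).linear_image (T : X →ₗ[ℝ] ℝ × ℝ)).closure
  have hmem : (F f, F g) ∈ K := by
    by_contra hp
    obtain ⟨φ, u, hKu, hup⟩ := geometric_hahn_banach_closed_point hKconv isClosed_closure hp
    set h : StrongDual ℝ X := φ.comp T with hh
    have hball : ∀ x ∈ closedBall (0 : X) 1, h x < u := fun x hx =>
      hKu (T x) (subset_closure ⟨x, hx, rfl⟩)
    have hu0 : 0 < u := by
      have := hball 0 (by simp)
      simpa using this
    have hnorm : ‖h‖ ≤ u := by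
      refine h.opNorm_le_bound hu0.le fun x => ?_
      rcases eq_or_ne x 0 with rfl | hx0
      · simp
      · have hxpos : (0:ℝ) < ‖x‖ := norm_pos_iff.2 hx0
        set x' : X := ‖x‖⁻¹ • x with hx'
        have hx'ball : x' ∈ closedBall (0 : X) 1 := by
          rw [mem_closedBall_zero_iff, hx', norm_smul, norm_inv, norm_norm,
            inv_mul_cancel₀ hxpos.ne']
        have h1 : h x' < u := hball x' hx'ball
        have h2 : h (-x') < u := hball (-x') (by
          simpa [mem_closedBall_zero_iff, norm_neg] using mem_closedBall_zero_iff.1 hx'ball)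
        have habs : |h x'| ≤ u := by
          rw [map_neg] at h2
          rw [abs_le]; constructor <;> linarith
        have hxx : h x = ‖x‖ * h x' := by
          rw [hx', map_smul]
          field_simp
          rw [smul_eq_mul, ← mul_assoc, mul_one_div_cancel hxpos.ne', one_mul]
        rw [Real.norm_eq_abs, hxx, abs_mul, abs_of_pos hxpos, mul_comm u ‖x‖]
        exact mul_le_mul_of_nonneg_left habs hxpos.le
    -- φ is determined by its values a, b
    set a : ℝ := φ (1, 0) with ha
    set b : ℝ := φ (0, 1) with hb
    have hφ : ∀ p : ℝ × ℝ, φ p = a * p.1 + b * p.2 := by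
      intro p
      have : p = p.1 • ((1:ℝ), (0:ℝ)) + p.2 • ((0:ℝ), (1:ℝ)) := by
        simp [Prod.ext_iff]
      conv_lhs => rw [this, map_add, map_smul, map_smul, smul_eq_mul, smul_eq_mul]
      simp [ha, hb, mul_comm]
    have hhab : h = a • f + b • g := by
      ext x
      have : h x = φ (f x, g x) := rfl
      rw [this, hφ]
      simp [mul_comm]
    have hFh : F h = φ (F f, F g) := by
      rw [hhab, hφ]
      simp [mul_comm]
    have h1 : u < F h := by rw [hFh]; exact hup
    have h2 : F h ≤ u := by
      calc F h ≤ ‖F h‖ := le_abs_self _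
      _ ≤ ‖F‖ * ‖h‖ := F.le_opNorm h
      _ ≤ 1 * u := mul_le_mul hF hnorm (norm_nonneg _) zero_le_one
      _ = u := one_mul _
    linarith
  rw [hK, Metric.mem_closure_iff] at hmem
  obtain ⟨q, ⟨x, hx, rfl⟩, hq⟩ := hmem δ hδ
  refine ⟨x, mem_closedBall_zero_iff.1 hx, ?_, ?_⟩ <;>
  · rw [Prod.dist_eq] at hq
    have h1 := lt_of_le_of_lt (le_max_left _ _) hq
    have h2 := lt_of_le_of_lt (le_max_right _ _) hq
    rw [Real.dist_eq] at h1 h2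
    first
    | (rw [abs_sub_comm]; exact h1)
    | (rw [abs_sub_comm]; exact h2)

end MyHelly

section MyAux

variable {Z : Type*} [NormedAddCommGroup Z] [NormedSpace ℝ Z]

lemma sSup_eval (z : Z) :
    sSup ((fun g : StrongDual ℝ Z => g z) '' closedBall (0 : StrongDual ℝ Z) 1) = ‖z‖ := by
  have h1 : (fun g : StrongDual ℝ Z => g z)
      = fun g : StrongDual ℝ Z => (inclusionInDoubleDual ℝ Z z) g := rfl
  rw [h1, sSup_apply_closedBall (inclusionInDoubleDual ℝ Z z)]
  exact (inclusionInDoubleDualLi ℝ (E := Z)).norm_map z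

variable {X : Type*} [NormedAddCommGroup X] [NormedSpace ℝ X]

lemma mem_wStarSlice_of_mem_ballSlice {f : StrongDual ℝ X} {α : ℝ} {x : X}
    (hx : x ∈ ballSlice X f α) :
    inclusionInDoubleDual ℝ X x ∈ wStarSlice (StrongDual ℝ X) f α := by
  obtain ⟨hx1, hx2⟩ := hx
  constructor
  · rw [mem_closedBall_zero_iff]
    have hn : ‖inclusionInDoubleDual ℝ X x‖ = ‖x‖ :=
      (inclusionInDoubleDualLi ℝ (E := X)).norm_map x
    rw [hn]
    exact mem_closedBall_zero_iff.1 hx1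
  · rw [sSup_eval]
    have : sSup (⇑f '' closedBall (0 : X) 1) = ‖f‖ := sSup_apply_closedBall f
    rw [this] at hx2
    exact hx2

lemma diam_ballSlice_le (f : StrongDual ℝ X) (α : ℝ) :
    diam (ballSlice X f α) ≤ diam (wStarSlice (StrongDual ℝ X) f α) := by
  have hb : Bornology.IsBounded (wStarSlice (StrongDual ℝ X) f α) :=
    (isBounded_closedBall (x := (0 : StrongDual ℝ (StrongDual ℝ X))) (r := 1)).subset fun g hg => hg.1
  apply diam_le_of_forall_dist_le diam_nonneg
  intro x hx y hy
  have hd : dist x y = dist (inclusionInDoubleDual ℝ X x) (inclusionInDoubleDual ℝ X y) :=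
    ((inclusionInDoubleDualLi ℝ (E := X)).isometry.dist_eq x y).symm
  rw [hd]
  exact dist_le_diam_of_mem hb (mem_wStarSlice_of_mem_ballSlice hx)
    (mem_wStarSlice_of_mem_ballSlice hy)

lemma diam_wStarSlice_le (f : StrongDual ℝ X) {α : ℝ} (hα : 0 < α) :
    diam (wStarSlice (StrongDual ℝ X) f (α / 2)) ≤ diam (ballSlice X f α) := by
  have hbB : Bornology.IsBounded (ballSlice X f α) :=
    (isBounded_closedBall (x := (0 : X)) (r := 1)).subset fun x hx => hx.1
  apply diam_le_of_forall_dist_le diam_nonneg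
  intro F hF G hG
  rw [dist_eq_norm]
  refine le_of_forall_pos_le_add fun ε hε => ?_
  set δ : ℝ := min (ε / 4) (α / 4) with hδdef
  have hδ : 0 < δ := lt_min (by linarith) (by linarith)
  have hδε : δ ≤ ε / 4 := min_le_left _ _
  have hδα : δ ≤ α / 4 := min_le_right _ _
  -- norming functional
  obtain ⟨g₀, hg₀, hg₀v⟩ := (F - G).exists_lt_apply_of_lt_opNorm
    (r := ‖F - G‖ - δ) (by linarith)
  have hsgn : ∃ g : StrongDual ℝ X, ‖g‖ ≤ 1 ∧ ‖F - G‖ - δ < (F - G) g := by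
    rcases le_or_gt 0 ((F - G) g₀) with h | h
    · exact ⟨g₀, hg₀.le, by rwa [Real.norm_eq_abs, abs_of_nonneg h] at hg₀v⟩
    · refine ⟨-g₀, by simpa using hg₀.le, ?_⟩
      rw [map_neg]
      rwa [Real.norm_eq_abs, abs_of_neg h] at hg₀v
  obtain ⟨g, hg1, hg2⟩ := hsgn
  have hFn : ‖F‖ ≤ 1 := mem_closedBall_zero_iff.1 hF.1
  have hGn : ‖G‖ ≤ 1 := mem_closedBall_zero_iff.1 hG.1
  have hFf : F f > ‖f‖ - α / 2 := by
    have := hF.2; rwa [sSup_eval] at this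
  have hGf : G f > ‖f‖ - α / 2 := by
    have := hG.2; rwa [sSup_eval] at this
  obtain ⟨x, hx1, hxf, hxg⟩ := helly F hFn f g hδ
  obtain ⟨y, hy1, hyf, hyg⟩ := helly G hGn f g hδ
  have hxmem : x ∈ ballSlice X f α := by
    refine ⟨mem_closedBall_zero_iff.2 hx1, ?_⟩
    rw [sSup_apply_closedBall f]
    have := abs_lt.1 hxf
    linarith [this.1, this.2]
  have hymem : y ∈ ballSlice X f α := by
    refine ⟨mem_closedBall_zero_iff.2 hy1, ?_⟩
    rw [sSup_apply_closedBall f]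
    have := abs_lt.1 hyf
    linarith [this.1, this.2]
  have hdist : dist x y ≤ diam (ballSlice X f α) := dist_le_diam_of_mem hbB hxmem hymem
  have hgxy : g x - g y ≤ dist x y := by
    have : g x - g y = g (x - y) := by rw [map_sub]
    rw [this, dist_eq_norm]
    calc g (x - y) ≤ ‖g (x - y)‖ := le_abs_self _
    _ ≤ ‖g‖ * ‖x - y‖ := g.le_opNorm _
    _ ≤ 1 * ‖x - y‖ := mul_le_mul_of_nonneg_right hg1 (norm_nonneg _)
    _ = ‖x - y‖ := one_mul _
  have hFGg : (F - G) g = F g - G g := by simp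
  have hxg' := abs_lt.1 hxg
  have hyg' := abs_lt.1 hyg
  linarith [hxg'.1, hxg'.2, hyg'.1, hyg'.2]


end MyAux

/-- The norm of `X*` is non rough if and only if `X` has the Ball Dentable
Property. -/
theorem statement_3 (X : Type*) [NormedAddCommGroup X] [NormedSpace ℝ X] [CompleteSpace X] :
    NonRough (StrongDual ℝ X) ↔ BDP X := by
  constructor
  · intro h ε hε
    have h2 : ¬ EpsRough (StrongDual ℝ X) ε := h ε hε
    unfold EpsRough at h2
    push_neg at h2
    obtain ⟨z, α, hα, hd⟩ := h2
    exact ⟨z, α, hα, lt_of_le_of_lt (diam_ballSlice_le z α) hd⟩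
  · intro h ε hε hr
    obtain ⟨f, α, hα, hd⟩ := h ε hε
    have h1 := hr f (α / 2) (by linarith)
    have h2 := diam_wStarSlice_le f hα
    linarith
end

section
/- Let X be a real Banach space. The norm of the dual space X* is weakly average non rough if and only if X has the Ball Huskable Property (BHP). -/
open Metric NormedSpace ENNReal

lemma weakBilin_basic_nhd {E F : Type*} [AddCommGroup E] [Module ℝ E] [AddCommGroup F] [Module ℝ F]
    (B : E →ₗ[ℝ] F →ₗ[ℝ] ℝ) {U : Set (WeakBilin B)} (hU : IsOpen U) {x : WeakBilin B} (hx : x ∈ U) :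
    ∃ (s : Finset F) (δ : ℝ), 0 < δ ∧ {y : WeakBilin B | ∀ f ∈ s, |B y f - B x f| < δ} ⊆ U := by
  have h0 : (fun y : WeakBilin B => y + x) ⁻¹' U ∈ nhds (0 : WeakBilin B) := by
    have hc : Continuous fun y : WeakBilin B => y + x := continuous_id.add continuous_const
    exact hc.continuousAt.preimage_mem_nhds (by simpa using hU.mem_nhds hx)
  rw [(LinearMap.hasBasis_weakBilin B).mem_iff] at h0
  obtain ⟨V, hV, hVU⟩ := h0
  obtain ⟨s, r, hr, rfl⟩ := (SeminormFamily.basisSets_iff _).mp hV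
  refine ⟨s, r, hr, fun y hy => ?_⟩
  have hmem : y - x ∈ (s.sup (B.toSeminormFamily)).ball 0 r := by
    rw [Seminorm.ball_finset_sup_eq_iInter _ _ _ hr]
    refine Set.mem_iInter₂.mpr ?_
    intro f hf
    refine (Seminorm.mem_ball_zero (p := B.toSeminormFamily f) (y := (y - x : E))).mpr ?_
    have := hy f hf
    have e : (B.toSeminormFamily f) (y - x : E) = |B y f - B x f| :=
      LinearMap.toSeminormFamily_apply.trans (by
        rw [← Real.norm_eq_abs, ← LinearMap.sub_apply]
        exact congrArg (fun g => ‖g f‖) (map_sub B (y : E) (x : E)))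
    exact e ▸ this
  simpa using hVU hmem

lemma helly_lemma {X : Type*} [NormedAddCommGroup X] [NormedSpace ℝ X]
    (F : StrongDual ℝ (StrongDual ℝ X)) (hF : ‖F‖ ≤ 1) (s : Finset (StrongDual ℝ X)) {δ : ℝ} (hδ : 0 < δ) :
    ∃ x : X, ‖x‖ ≤ 1 ∧ ∀ f ∈ s, |f x - F f| < δ := by
  classical
  by_contra hcon
  push_neg at hcon
  set T : X →ₗ[ℝ] (s → ℝ) := LinearMap.pi (fun f => ((f : StrongDual ℝ X) : X →ₗ[ℝ] ℝ)) with hT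
  set c : s → ℝ := fun f => F f with hc
  set S : Set (s → ℝ) := T '' (closedBall (0:X) 1) with hS
  have hSconv : Convex ℝ (closure S) := ((convex_closedBall (0:X) 1).linear_image T).closure
  have hcS : c ∉ closure S := by
    intro hmem
    rw [Metric.mem_closure_iff] at hmem
    obtain ⟨y, ⟨x, hx, rfl⟩, hdist⟩ := hmem δ hδ
    obtain ⟨f, hfs, hfd⟩ := hcon x (mem_closedBall_zero_iff.mp hx)
    have hle : dist (c ⟨f, hfs⟩) (T x ⟨f, hfs⟩) ≤ dist c (T x) := dist_le_pi_dist _ _ _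
    have h1 : dist (c ⟨f, hfs⟩) (T x ⟨f, hfs⟩) = |f x - F f| := by
      rw [Real.dist_eq, abs_sub_comm]
      rfl
    rw [h1] at hle

    linarith
  obtain ⟨lam, u, hcu, hSbd⟩ := geometric_hahn_banach_point_closed hSconv isClosed_closure hcS
  set g : StrongDual ℝ X := ∑ i : s, lam (fun j => if i = j then 1 else 0) • (i : StrongDual ℝ X) with hg
  have hgx : ∀ x : X, g x = lam (T x) := by
    intro x
    have h2 := LinearMap.pi_apply_eq_sum_univ (lam : (s → ℝ) →ₗ[ℝ] ℝ) (T x)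
    simp only [ContinuousLinearMap.coe_coe] at h2
    rw [h2, hg]
    simp only [ContinuousLinearMap.coe_sum', Finset.sum_apply, ContinuousLinearMap.coe_smul',
      Pi.smul_apply, smul_eq_mul]
    refine Finset.sum_congr rfl fun i _ => ?_
    rw [mul_comm]
    rfl
  have hgu : ∀ x : X, ‖x‖ ≤ 1 → u < g x := by
    intro x hx
    rw [hgx]
    exact hSbd _ (subset_closure ⟨x, mem_closedBall_zero_iff.mpr hx, rfl⟩)
  have hu0 : u < 0 := by simpa using hgu 0 (by simp)
  have hgb : ∀ x : X, ‖x‖ ≤ 1 → |g x| ≤ -u := by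
    intro x hx
    have h1 := hgu x hx
    have h2 := hgu (-x) (by simpa using hx)
    rw [map_neg] at h2
    rw [abs_le]
    constructor <;> linarith
  have hgnorm : ‖g‖ ≤ -u := by
    refine g.opNorm_le_bound (by linarith) fun x => ?_
    rcases eq_or_ne x 0 with rfl | hx0
    · simp
    · have hxn : 0 < ‖x‖ := norm_pos_iff.mpr hx0
      have h1 : ‖(‖x‖⁻¹ • x)‖ ≤ 1 := by
        rw [norm_smul, norm_inv, norm_norm]
        rw [inv_mul_cancel₀ hxn.ne']
      have h2 := hgb _ h1
      rw [map_smul, smul_eq_mul, abs_mul, abs_inv, abs_norm] at h2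
      rw [Real.norm_eq_abs]
      rw [inv_mul_le_iff₀ hxn] at h2
      linarith [h2]
  have hFg : F g = lam c := by
    have h2 := LinearMap.pi_apply_eq_sum_univ (lam : (s → ℝ) →ₗ[ℝ] ℝ) c
    simp only [ContinuousLinearMap.coe_coe] at h2
    rw [hg, map_sum, h2]
    refine Finset.sum_congr rfl fun i _ => ?_
    rw [map_smul, smul_eq_mul, smul_eq_mul, mul_comm]
  have habs : |F g| ≤ -u := by
    have h1 := F.le_opNorm g
    have h2 : ‖F‖ * ‖g‖ ≤ 1 * (-u) := by
      apply mul_le_mul hF hgnorm (norm_nonneg g) zero_le_one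
    rw [one_mul] at h2
    calc |F g| = ‖F g‖ := (Real.norm_eq_abs _).symm
    _ ≤ ‖F‖ * ‖g‖ := h1
    _ ≤ -u := h2
  rw [hFg] at habs
  rw [abs_le] at habs
  linarith [habs.1]

/-- The norm of `X*` is weakly average non rough if and only if `X` has the Ball
Huskable Property. -/
theorem statement_4 (X : Type*) [NormedAddCommGroup X] [NormedSpace ℝ X] [CompleteSpace X] :
    WeaklyAvgNonRough (StrongDual ℝ X) ↔ BHP X := by
  classical
  constructor
  · -- WeaklyAvgNonRough → BHP
    intro h ε hε
    have h2 := h ε hε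
    unfold WeaklyEpsAvgRough at h2
    push_neg at h2
    obtain ⟨V, hVopen, hVne, hVdiam⟩ := h2
    obtain ⟨U, hUopen, rfl⟩ := hVopen
    obtain ⟨F, hFball, hFU⟩ := hVne
    have hFn : ‖F‖ ≤ 1 := mem_closedBall_zero_iff.mp hFball
    obtain ⟨s, δ, hδ, hsub⟩ := weakBilin_basic_nhd (topDualPairing ℝ (StrongDual ℝ X)) hUopen hFU
    set U' : Set (WeakSpace ℝ X) :=
      {y : WeakSpace ℝ X | ∀ f ∈ s, |(topDualPairing ℝ X).flip y f - F f| < δ} with hU'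
    have hU'open : IsOpen U' := by
      have : U' = ⋂ f ∈ s, {y : WeakSpace ℝ X | |(topDualPairing ℝ X).flip y f - F f| < δ} := by
        ext y; simp [hU']
      rw [this]
      refine isOpen_biInter_finset fun f _ => ?_
      have hc : Continuous fun y : WeakSpace ℝ X =>
          |(topDualPairing ℝ X).flip y f - F f| :=
        ((WeakBilin.eval_continuous ((topDualPairing ℝ X).flip) f).sub continuous_const).abs
      exact isOpen_lt hc continuous_const
    refine ⟨{x | x ∈ closedBall (0 : X) 1 ∧ toWeakSpace ℝ X x ∈ U'}, ⟨U', hU'open, rfl⟩, ?_, ?_⟩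
    · obtain ⟨x, hx1, hx2⟩ := helly_lemma F hFn s hδ
      exact ⟨x, mem_closedBall_zero_iff.mpr hx1, fun f hf => hx2 f hf⟩
    · have hbdd : Bornology.IsBounded {f : StrongDual ℝ (StrongDual ℝ X) |
          f ∈ closedBall 0 1 ∧ StrongDual.toWeakDual f ∈ U} :=
        (isBounded_closedBall (x := (0 : StrongDual ℝ (StrongDual ℝ X))) (r := 1)).subset fun f hf => hf.1
      have hmap : ∀ x : X, x ∈ {x | x ∈ closedBall (0 : X) 1 ∧ toWeakSpace ℝ X x ∈ U'} →
          (inclusionInDoubleDualLi ℝ x : StrongDual ℝ (StrongDual ℝ X)) ∈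
            {f : StrongDual ℝ (StrongDual ℝ X) | f ∈ closedBall 0 1 ∧ StrongDual.toWeakDual f ∈ U} := by
        intro x hx
        refine ⟨(mem_closedBall_zero_iff (E := StrongDual ℝ (StrongDual ℝ X))).mpr (by
          rw [(inclusionInDoubleDualLi ℝ).norm_map]
          exact mem_closedBall_zero_iff.mp hx.1), ?_⟩
        apply hsub
        intro f hf
        exact hx.2 f hf
      have hle : diam {x | x ∈ closedBall (0 : X) 1 ∧ toWeakSpace ℝ X x ∈ U'} ≤
          diam {f : StrongDual ℝ (StrongDual ℝ X) | f ∈ closedBall 0 1 ∧ StrongDual.toWeakDual f ∈ U} := by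
        refine diam_le_of_forall_dist_le diam_nonneg fun x hx y hy => ?_
        have := dist_le_diam_of_mem hbdd (hmap x hx) (hmap y hy)
        rwa [LinearIsometry.dist_map] at this
      exact lt_of_le_of_lt hle hVdiam
  · -- BHP → WeaklyAvgNonRough
    intro h ε hε hrough
    obtain ⟨W, hWopen, hWne, hWdiam⟩ := h (ε/2) (by linarith)
    obtain ⟨U, hUopen, rfl⟩ := hWopen
    obtain ⟨x0, hx0ball, hx0U⟩ := hWne
    obtain ⟨s, δ, hδ, hsub⟩ := weakBilin_basic_nhd ((topDualPairing ℝ X).flip) hUopen hx0U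
    set V : Set (StrongDual ℝ (StrongDual ℝ X)) :=
      {G | G ∈ closedBall (0 : StrongDual ℝ (StrongDual ℝ X)) 1 ∧ ∀ f ∈ s, |G f - f x0| < δ} with hV
    have hVopen : IsRelWStarOpen (StrongDual ℝ X) V := by
      refine ⟨{H : WeakDual ℝ (StrongDual ℝ X) | ∀ f ∈ s, |H f - f x0| < δ}, ?_, rfl⟩
      have : {H : WeakDual ℝ (StrongDual ℝ X) | ∀ f ∈ s, |H f - f x0| < δ} =
          ⋂ f ∈ s, {H : WeakDual ℝ (StrongDual ℝ X) | |H f - f x0| < δ} := by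
        ext y; simp
      rw [this]
      refine isOpen_biInter_finset fun f _ => ?_
      have hc : Continuous fun H : WeakDual ℝ (StrongDual ℝ X) => |H f - f x0| :=
        ((WeakDual.eval_continuous f).sub continuous_const).abs
      exact isOpen_lt hc continuous_const
    have hVne : V.Nonempty := by
      refine ⟨inclusionInDoubleDualLi ℝ x0, (mem_closedBall_zero_iff (E := StrongDual ℝ (StrongDual ℝ X))).mpr (by
        rw [(inclusionInDoubleDualLi ℝ).norm_map]
        exact mem_closedBall_zero_iff.mp hx0ball), fun f hf => by
        have hr : (inclusionInDoubleDualLi ℝ x0 : StrongDual ℝ (StrongDual ℝ X)) f = f x0 := rfl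
        rw [hr]
        simpa using hδ⟩
    -- membership in W from the weak bounds
    have hmemW : ∀ x : X, ‖x‖ ≤ 1 → (∀ f ∈ s, |f x - f x0| < δ) →
        x ∈ {x | x ∈ closedBall (0 : X) 1 ∧ toWeakSpace ℝ X x ∈ U} := by
      intro x hx1 hx2
      exact ⟨mem_closedBall_zero_iff.mpr hx1, hsub fun f hf => hx2 f hf⟩
    have hWbdd : Bornology.IsBounded {x : X | x ∈ closedBall (0 : X) 1 ∧ toWeakSpace ℝ X x ∈ U} :=
      (isBounded_closedBall (x := (0 : X)) (r := 1)).subset fun x hx => hx.1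
    have approx : ∀ G ∈ V, ∀ hf : StrongDual ℝ X, ∀ η > 0, ∃ x : X, ‖x‖ ≤ 1 ∧
        (∀ f ∈ s, |f x - f x0| < δ) ∧ |hf x - G hf| < η := by
      intro G hG hf η hη
      have hGn : ‖G‖ ≤ 1 := (mem_closedBall_zero_iff (E := StrongDual ℝ (StrongDual ℝ X))).mp hG.1
      rcases s.eq_empty_or_nonempty with rfl | hsne
      · obtain ⟨x, hx1, hx2⟩ := helly_lemma G hGn {hf} hη
        exact ⟨x, hx1, fun f hf => by simp at hf, hx2 hf (Finset.mem_singleton_self _)⟩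
      · set ρ := min η (s.inf' hsne fun f => δ - |G f - f x0|) with hρdef
        have hρ : 0 < ρ := by
          refine lt_min hη ?_
          rw [Finset.lt_inf'_iff]
          intro f hfs
          have := hG.2 f hfs
          linarith
        obtain ⟨x, hx1, hx2⟩ := helly_lemma G hGn (insert hf s) hρ
        refine ⟨x, hx1, ?_, ?_⟩
        · intro f hfs
          have h1 := hx2 f (Finset.mem_insert_of_mem hfs)
          have h2 : ρ ≤ δ - |G f - f x0| :=
            (min_le_right _ _).trans (Finset.inf'_le _ hfs)
          calc |f x - f x0| ≤ |f x - G f| + |G f - f x0| := abs_sub_le _ _ _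
          _ < δ := by linarith
        · exact lt_of_lt_of_le (hx2 hf (Finset.mem_insert_self _ _)) (min_le_left _ _)
    have hdiamV : diam V ≤ diam {x : X | x ∈ closedBall (0 : X) 1 ∧ toWeakSpace ℝ X x ∈ U} := by
      refine diam_le_of_forall_dist_le diam_nonneg fun F hF G hG => ?_
      have unit : ∀ hf : StrongDual ℝ X, ‖hf‖ ≤ 1 → |F hf - G hf| ≤
          diam {x : X | x ∈ closedBall (0 : X) 1 ∧ toWeakSpace ℝ X x ∈ U} := by
        intro hf hhf
        refine le_of_forall_pos_le_add fun η hη => ?_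
        obtain ⟨x, hx1, hx2, hx3⟩ := approx F hF hf (η/2) (by linarith)
        obtain ⟨y, hy1, hy2, hy3⟩ := approx G hG hf (η/2) (by linarith)
        have hd : dist x y ≤ diam {x : X | x ∈ closedBall (0 : X) 1 ∧ toWeakSpace ℝ X x ∈ U} :=
          dist_le_diam_of_mem hWbdd (hmemW x hx1 hx2) (hmemW y hy1 hy2)
        have hhxy : |hf x - hf y| ≤ dist x y := by
          have h1 := hf.le_opNorm (x - y)
          rw [map_sub] at h1
          have h2 : ‖hf‖ * ‖x - y‖ ≤ 1 * ‖x - y‖ :=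
            mul_le_mul_of_nonneg_right hhf (norm_nonneg _)
          rw [one_mul] at h2
          rw [dist_eq_norm]
          calc |hf x - hf y| = ‖hf x - hf y‖ := (Real.norm_eq_abs _).symm
          _ ≤ ‖hf‖ * ‖x - y‖ := h1
          _ ≤ ‖x - y‖ := h2
        calc |F hf - G hf| ≤ |F hf - hf x| + |hf x - G hf| := abs_sub_le _ _ _
        _ ≤ |F hf - hf x| + (|hf x - hf y| + |hf y - G hf|) := by
            linarith [abs_sub_le (hf x) (hf y) (G hf)]
        _ ≤ diam {x : X | x ∈ closedBall (0 : X) 1 ∧ toWeakSpace ℝ X x ∈ U} + η := by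
            rw [abs_sub_comm] at hx3
            linarith
      rw [dist_eq_norm F G]
      refine ContinuousLinearMap.opNorm_le_bound _ diam_nonneg fun hf => ?_
      rcases eq_or_ne hf 0 with rfl | h0
      · simp
      · have hpos : 0 < ‖hf‖ := norm_pos_iff.mpr h0
        have h1 : ‖(‖hf‖⁻¹ • hf)‖ ≤ 1 := by
          rw [norm_smul, norm_inv, norm_norm, inv_mul_cancel₀ hpos.ne']
        have h2 := unit _ h1
        rw [map_smul, map_smul, smul_eq_mul, smul_eq_mul, ← mul_sub, abs_mul, abs_inv,
          abs_norm] at h2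
        rw [inv_mul_le_iff₀ hpos] at h2
        have h3 : ‖(F - G) hf‖ = |F hf - G hf| := by
          rw [ContinuousLinearMap.sub_apply, Real.norm_eq_abs]
        rw [h3]
        rw [mul_comm] at h2
        exact h2
    have hfinal := hrough V hVopen hVne
    linarith [lt_of_le_of_lt hdiamV hWdiam, hfinal]
end

section
/- Let X and Y be real Banach spaces. The norm of the direct sum X ⊕₁ Y (product space with norm ‖(x,y)‖ = ‖x‖ + ‖y‖) is weakly average non rough if and only if both the norm of X and the norm of Y are weakly average non rough. -/
open Metric NormedSpace ENNReal

section MyAux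
variable {X Y : Type*} [NormedAddCommGroup X] [NormedSpace ℝ X]
  [NormedAddCommGroup Y] [NormedSpace ℝ Y]

noncomputable def myProjX : WithLp 1 (X × Y) →L[ℝ] X :=
  (ContinuousLinearMap.fst ℝ X Y).comp
    (WithLp.prodContinuousLinearEquiv 1 ℝ X Y).toContinuousLinearMap

noncomputable def myProjY : WithLp 1 (X × Y) →L[ℝ] Y :=
  (ContinuousLinearMap.snd ℝ X Y).comp
    (WithLp.prodContinuousLinearEquiv 1 ℝ X Y).toContinuousLinearMap

noncomputable def myInjX : X →L[ℝ] WithLp 1 (X × Y) :=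
  ((WithLp.prodContinuousLinearEquiv 1 ℝ X Y).symm).toContinuousLinearMap.comp
    (ContinuousLinearMap.inl ℝ X Y)

noncomputable def myInjY : Y →L[ℝ] WithLp 1 (X × Y) :=
  ((WithLp.prodContinuousLinearEquiv 1 ℝ X Y).symm).toContinuousLinearMap.comp
    (ContinuousLinearMap.inr ℝ X Y)

lemma myL1norm (z : WithLp 1 (X × Y)) : ‖z‖ = ‖myProjX z‖ + ‖myProjY z‖ := by
  have := WithLp.prod_norm_eq_of_nat (α := X) (β := Y) 1 (by norm_cast) z
  simpa [myProjX, myProjY] using this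

lemma myProjX_injX (x : X) : myProjX (myInjX x : WithLp 1 (X × Y)) = x := rfl
lemma myProjY_injX (x : X) : myProjY (myInjX x : WithLp 1 (X × Y)) = 0 := rfl
lemma myProjX_injY (y : Y) : myProjX (myInjY y : WithLp 1 (X × Y)) = 0 := rfl
lemma myProjY_injY (y : Y) : myProjY (myInjY y : WithLp 1 (X × Y)) = y := rfl

lemma myDecomp (z : WithLp 1 (X × Y)) : myInjX (myProjX z) + myInjY (myProjY z) = z := by
  apply (WithLp.prodContinuousLinearEquiv 1 ℝ X Y).injective
  ext <;> simp [myInjX, myInjY, myProjX, myProjY]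

end MyAux

section MyAux2
variable {X Y : Type*} [NormedAddCommGroup X] [NormedSpace ℝ X]
  [NormedAddCommGroup Y] [NormedSpace ℝ Y]

noncomputable def myRestX (f : StrongDual ℝ (WithLp 1 (X × Y))) : StrongDual ℝ X := f.comp myInjX
noncomputable def myRestY (f : StrongDual ℝ (WithLp 1 (X × Y))) : StrongDual ℝ Y := f.comp myInjY

noncomputable def myCombo (p : StrongDual ℝ X) (q : StrongDual ℝ Y) : StrongDual ℝ (WithLp 1 (X × Y)) :=
  p.comp myProjX + q.comp myProjY

lemma myRestX_combo (p : StrongDual ℝ X) (q : StrongDual ℝ Y) : myRestX (myCombo p q) = p := by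
  ext x
  simp [myRestX, myCombo, myProjX_injX, myProjY_injX]

lemma myRestY_combo (p : StrongDual ℝ X) (q : StrongDual ℝ Y) : myRestY (myCombo p q) = q := by
  ext y
  simp [myRestY, myCombo, myProjX_injY, myProjY_injY]

lemma myCombo_rest (f : StrongDual ℝ (WithLp 1 (X × Y))) : myCombo (myRestX f) (myRestY f) = f := by
  ext z
  have : f (myInjX (myProjX z) + myInjY (myProjY z)) = f z := by rw [myDecomp]
  simpa [myCombo, myRestX, myRestY] using this

lemma myNorm_injX (x : X) : ‖(myInjX x : WithLp 1 (X × Y))‖ = ‖x‖ := by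
  rw [myL1norm, myProjX_injX, myProjY_injX]; simp

lemma myNorm_injY (y : Y) : ‖(myInjY y : WithLp 1 (X × Y))‖ = ‖y‖ := by
  rw [myL1norm, myProjX_injY, myProjY_injY]; simp

lemma myNorm_restX_le (f : StrongDual ℝ (WithLp 1 (X × Y))) : ‖myRestX f‖ ≤ ‖f‖ := by
  refine ContinuousLinearMap.opNorm_le_bound _ (norm_nonneg f) fun x => ?_
  calc ‖myRestX f x‖ = ‖f (myInjX x)‖ := rfl
    _ ≤ ‖f‖ * ‖(myInjX x : WithLp 1 (X × Y))‖ := f.le_opNorm _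
    _ = ‖f‖ * ‖x‖ := by rw [myNorm_injX]

lemma myNorm_restY_le (f : StrongDual ℝ (WithLp 1 (X × Y))) : ‖myRestY f‖ ≤ ‖f‖ := by
  refine ContinuousLinearMap.opNorm_le_bound _ (norm_nonneg f) fun y => ?_
  calc ‖myRestY f y‖ = ‖f (myInjY y)‖ := rfl
    _ ≤ ‖f‖ * ‖(myInjY y : WithLp 1 (X × Y))‖ := f.le_opNorm _
    _ = ‖f‖ * ‖y‖ := by rw [myNorm_injY]

lemma myNorm_combo_le (p : StrongDual ℝ X) (q : StrongDual ℝ Y) : ‖myCombo p q‖ ≤ max ‖p‖ ‖q‖ := by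
  refine ContinuousLinearMap.opNorm_le_bound _ (le_max_of_le_left (norm_nonneg p)) fun z => ?_
  have h1 : ‖p (myProjX z)‖ ≤ ‖p‖ * ‖myProjX z‖ := p.le_opNorm _
  have h2 : ‖q (myProjY z)‖ ≤ ‖q‖ * ‖myProjY z‖ := q.le_opNorm _
  calc ‖myCombo p q z‖ = ‖p (myProjX z) + q (myProjY z)‖ := rfl
    _ ≤ ‖p (myProjX z)‖ + ‖q (myProjY z)‖ := norm_add_le _ _
    _ ≤ ‖p‖ * ‖myProjX z‖ + ‖q‖ * ‖myProjY z‖ := add_le_add h1 h2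
    _ ≤ max ‖p‖ ‖q‖ * ‖myProjX z‖ + max ‖p‖ ‖q‖ * ‖myProjY z‖ := by
        gcongr <;> [exact le_max_left _ _; exact le_max_right _ _]
    _ = max ‖p‖ ‖q‖ * ‖z‖ := by rw [myL1norm]; ring

lemma myNorm_le_max (f : StrongDual ℝ (WithLp 1 (X × Y))) :
    ‖f‖ ≤ max ‖myRestX f‖ ‖myRestY f‖ := by
  conv_lhs => rw [← myCombo_rest f]
  exact myNorm_combo_le _ _

lemma myRestX_sub (f g : StrongDual ℝ (WithLp 1 (X × Y))) :
    myRestX (f - g) = myRestX f - myRestX g := by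
  ext x; simp [myRestX]

lemma myRestY_sub (f g : StrongDual ℝ (WithLp 1 (X × Y))) :
    myRestY (f - g) = myRestY f - myRestY g := by
  ext y; simp [myRestY]

lemma myCont_comboW (q : StrongDual ℝ Y) :
    Continuous fun g : WeakDual ℝ X =>
      (StrongDual.toWeakDual (myCombo (StrongDual.toWeakDual.symm g) q) :
        WeakDual ℝ (WithLp 1 (X × Y))) := by
  apply WeakDual.continuous_of_continuous_eval
  intro z
  show Continuous fun g : WeakDual ℝ X => g (myProjX z) + q (myProjY z)
  exact (WeakDual.eval_continuous _).add continuous_const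

lemma myCont_restXW :
    Continuous fun f : WeakDual ℝ (WithLp 1 (X × Y)) =>
      (StrongDual.toWeakDual (myRestX (StrongDual.toWeakDual.symm f)) : WeakDual ℝ X) := by
  apply WeakDual.continuous_of_continuous_eval
  intro x
  exact WeakDual.eval_continuous (myInjX x)

lemma myCont_restYW :
    Continuous fun f : WeakDual ℝ (WithLp 1 (X × Y)) =>
      (StrongDual.toWeakDual (myRestY (StrongDual.toWeakDual.symm f)) : WeakDual ℝ Y) := by
  apply WeakDual.continuous_of_continuous_eval
  intro y
  exact WeakDual.eval_continuous (myInjY y)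

end MyAux2

lemma myCont_comboW' {X Y : Type*} [NormedAddCommGroup X] [NormedSpace ℝ X]
    [NormedAddCommGroup Y] [NormedSpace ℝ Y] (p : StrongDual ℝ X) :
    Continuous fun g : WeakDual ℝ Y =>
      (StrongDual.toWeakDual (myCombo p (StrongDual.toWeakDual.symm g)) :
        WeakDual ℝ (WithLp 1 (X × Y))) := by
  apply WeakDual.continuous_of_continuous_eval
  intro z
  show Continuous fun g : WeakDual ℝ Y => p (myProjX z) + g (myProjY z)
  exact continuous_const.add (WeakDual.eval_continuous _)

section MyMain

lemma my_not_wear {Z : Type*} [NormedAddCommGroup Z] [NormedSpace ℝ Z] {ε : ℝ} :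
    ¬ WeaklyEpsAvgRough Z ε ↔
      ∃ V : Set (StrongDual ℝ Z), IsRelWStarOpen Z V ∧ V.Nonempty ∧ diam V < ε := by
  constructor
  · intro h
    unfold WeaklyEpsAvgRough at h
    push_neg at h
    obtain ⟨V, h1, h2, h3⟩ := h
    exact ⟨V, h1, h2, h3⟩
  · rintro ⟨V, h1, h2, h3⟩ h
    exact absurd (h V h1 h2) (not_le.mpr h3)

/-- The norm of `X ⊕₁ Y` is weakly average non rough iff both the norms of `X`
and `Y` are weakly average non rough. -/
theorem statement_7 (X Y : Type*) [NormedAddCommGroup X] [NormedSpace ℝ X] [CompleteSpace X]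
    [NormedAddCommGroup Y] [NormedSpace ℝ Y] [CompleteSpace Y] :
    WeaklyAvgNonRough (WithLp 1 (X × Y)) ↔ (WeaklyAvgNonRough X ∧ WeaklyAvgNonRough Y) := by
  constructor
  · intro h
    constructor
    · -- X is weakly average non rough
      intro ε hε
      obtain ⟨V, ⟨U, hU, hVU⟩, ⟨f₀, hf₀⟩, hd⟩ := my_not_wear.mp (h ε hε)
      rw [my_not_wear]
      rw [hVU] at hf₀
      obtain ⟨hf₀ball, hf₀U⟩ := hf₀
      rw [mem_closedBall_zero_iff] at hf₀ball
      set q : StrongDual ℝ Y := myRestY f₀ with hq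
      have hqnorm : ‖q‖ ≤ 1 := le_trans (myNorm_restY_le f₀) hf₀ball
      set W : Set (StrongDual ℝ X) :=
        {g | g ∈ closedBall (0 : StrongDual ℝ X) 1 ∧ StrongDual.toWeakDual (myCombo g q) ∈ U} with hW
      have hmem : ∀ g ∈ W, myCombo g q ∈ V := by
        rintro g ⟨hg1, hg2⟩
        rw [hVU]
        refine ⟨?_, hg2⟩
        rw [mem_closedBall_zero_iff] at hg1 ⊢
        exact le_trans (myNorm_combo_le g q) (max_le hg1 hqnorm)
      refine ⟨W, ?_, ?_, ?_⟩
      · refine ⟨(fun g : WeakDual ℝ X =>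
          (StrongDual.toWeakDual (myCombo (StrongDual.toWeakDual.symm g) q) :
            WeakDual ℝ (WithLp 1 (X × Y)))) ⁻¹' U, hU.preimage (myCont_comboW q), ?_⟩
        rfl
      · refine ⟨myRestX f₀, ?_, ?_⟩
        · rw [mem_closedBall_zero_iff]
          exact le_trans (myNorm_restX_le f₀) hf₀ball
        · show StrongDual.toWeakDual (myCombo (myRestX f₀) (myRestY f₀)) ∈ U
          rw [myCombo_rest f₀]
          exact hf₀U
      · have hVb : Bornology.IsBounded V := by
          apply (isBounded_closedBall (x := (0 : StrongDual ℝ (WithLp 1 (X × Y)))) (r := 1)).subset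
          rw [hVU]; exact fun f hf => hf.1
        refine lt_of_le_of_lt (diam_le_of_forall_dist_le diam_nonneg ?_) hd
        intro g hg g' hg'
        have key : dist g g' ≤ dist (myCombo g q) (myCombo g' q) := by
          rw [dist_eq_norm, dist_eq_norm]
          have : g - g' = myRestX (myCombo g q - myCombo g' q) := by
            rw [myRestX_sub, myRestX_combo, myRestX_combo]
          rw [this]
          exact myNorm_restX_le _
        exact le_trans key (dist_le_diam_of_mem hVb (hmem g hg) (hmem g' hg'))
    · -- Y is weakly average non rough
      intro ε hε
      obtain ⟨V, ⟨U, hU, hVU⟩, ⟨f₀, hf₀⟩, hd⟩ := my_not_wear.mp (h ε hε)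
      rw [my_not_wear]
      rw [hVU] at hf₀
      obtain ⟨hf₀ball, hf₀U⟩ := hf₀
      rw [mem_closedBall_zero_iff] at hf₀ball
      set p : StrongDual ℝ X := myRestX f₀ with hp
      have hpnorm : ‖p‖ ≤ 1 := le_trans (myNorm_restX_le f₀) hf₀ball
      set W : Set (StrongDual ℝ Y) :=
        {g | g ∈ closedBall (0 : StrongDual ℝ Y) 1 ∧ StrongDual.toWeakDual (myCombo p g) ∈ U} with hW
      have hmem : ∀ g ∈ W, myCombo p g ∈ V := by
        rintro g ⟨hg1, hg2⟩
        rw [hVU]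
        refine ⟨?_, hg2⟩
        rw [mem_closedBall_zero_iff] at hg1 ⊢
        exact le_trans (myNorm_combo_le p g) (max_le hpnorm hg1)
      refine ⟨W, ?_, ?_, ?_⟩
      · refine ⟨(fun g : WeakDual ℝ Y =>
          (StrongDual.toWeakDual (myCombo p (StrongDual.toWeakDual.symm g)) :
            WeakDual ℝ (WithLp 1 (X × Y)))) ⁻¹' U, hU.preimage (myCont_comboW' p), ?_⟩
        rfl
      · refine ⟨myRestY f₀, ?_, ?_⟩
        · rw [mem_closedBall_zero_iff]
          exact le_trans (myNorm_restY_le f₀) hf₀ball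
        · show StrongDual.toWeakDual (myCombo (myRestX f₀) (myRestY f₀)) ∈ U
          rw [myCombo_rest f₀]
          exact hf₀U
      · have hVb : Bornology.IsBounded V := by
          apply (isBounded_closedBall (x := (0 : StrongDual ℝ (WithLp 1 (X × Y)))) (r := 1)).subset
          rw [hVU]; exact fun f hf => hf.1
        refine lt_of_le_of_lt (diam_le_of_forall_dist_le diam_nonneg ?_) hd
        intro g hg g' hg'
        have key : dist g g' ≤ dist (myCombo p g) (myCombo p g') := by
          rw [dist_eq_norm, dist_eq_norm]
          have : g - g' = myRestY (myCombo p g - myCombo p g') := by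
            rw [myRestY_sub, myRestY_combo, myRestY_combo]
          rw [this]
          exact myNorm_restY_le _
        exact le_trans key (dist_le_diam_of_mem hVb (hmem g hg) (hmem g' hg'))
  · rintro ⟨hX, hY⟩ ε hε
    obtain ⟨VX, ⟨UX, hUX, hVXU⟩, ⟨p, hpV⟩, hdX⟩ := my_not_wear.mp (hX ε hε)
    obtain ⟨VY, ⟨UY, hUY, hVYU⟩, ⟨q, hqV⟩, hdY⟩ := my_not_wear.mp (hY ε hε)
    rw [my_not_wear]
    rw [hVXU] at hpV; obtain ⟨hpball, hpU⟩ := hpV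
    rw [hVYU] at hqV; obtain ⟨hqball, hqU⟩ := hqV
    rw [mem_closedBall_zero_iff] at hpball hqball
    set ΦX : WeakDual ℝ (WithLp 1 (X × Y)) → WeakDual ℝ X :=
      fun f => StrongDual.toWeakDual (myRestX (StrongDual.toWeakDual.symm f)) with hΦX
    set ΦY : WeakDual ℝ (WithLp 1 (X × Y)) → WeakDual ℝ Y :=
      fun f => StrongDual.toWeakDual (myRestY (StrongDual.toWeakDual.symm f)) with hΦY
    set U : Set (WeakDual ℝ (WithLp 1 (X × Y))) := ΦX ⁻¹' UX ∩ ΦY ⁻¹' UY with hUdef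
    set V : Set (StrongDual ℝ (WithLp 1 (X × Y))) :=
      {f | f ∈ closedBall (0 : StrongDual ℝ (WithLp 1 (X × Y))) 1 ∧ StrongDual.toWeakDual f ∈ U} with hVdef
    have hXb : Bornology.IsBounded VX := by
      apply (isBounded_closedBall (x := (0 : StrongDual ℝ X)) (r := 1)).subset
      rw [hVXU]; exact fun f hf => hf.1
    have hYb : Bornology.IsBounded VY := by
      apply (isBounded_closedBall (x := (0 : StrongDual ℝ Y)) (r := 1)).subset
      rw [hVYU]; exact fun f hf => hf.1
    refine ⟨V, ⟨U, (hUX.preimage myCont_restXW).inter (hUY.preimage myCont_restYW), rfl⟩,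
      ⟨myCombo p q, ?_, ?_, ?_⟩, ?_⟩
    · rw [mem_closedBall_zero_iff]
      exact le_trans (myNorm_combo_le p q) (max_le hpball hqball)
    · show StrongDual.toWeakDual (myRestX (myCombo p q)) ∈ UX
      rw [myRestX_combo]; exact hpU
    · show StrongDual.toWeakDual (myRestY (myCombo p q)) ∈ UY
      rw [myRestY_combo]; exact hqU
    · have hmemX : ∀ f ∈ V, myRestX f ∈ VX := by
        rintro f ⟨hf1, hf2, _⟩
        rw [hVXU]
        rw [mem_closedBall_zero_iff] at hf1
        exact ⟨mem_closedBall_zero_iff.mpr (le_trans (myNorm_restX_le f) hf1), hf2⟩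
      have hmemY : ∀ f ∈ V, myRestY f ∈ VY := by
        rintro f ⟨hf1, _, hf3⟩
        rw [hVYU]
        rw [mem_closedBall_zero_iff] at hf1
        exact ⟨mem_closedBall_zero_iff.mpr (le_trans (myNorm_restY_le f) hf1), hf3⟩
      have hmax : max (diam VX) (diam VY) < ε := max_lt hdX hdY
      refine lt_of_le_of_lt (diam_le_of_forall_dist_le
        (le_trans diam_nonneg (le_max_left _ _)) ?_) hmax
      intro f hf f' hf'
      rw [dist_eq_norm]
      refine le_trans (myNorm_le_max (f - f')) (max_le_max ?_ ?_)
      · rw [myRestX_sub, ← dist_eq_norm]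
        exact dist_le_diam_of_mem hXb (hmemX f hf) (hmemX f' hf')
      · rw [myRestY_sub, ← dist_eq_norm]
        exact dist_le_diam_of_mem hYb (hmemY f hf) (hmemY f' hf')

end MyMain
end

section
/- Let X be a real Banach space, Y a closed subspace of X, and P : X* → X* a continuous linear projection (P ∘ P = P) with ‖P‖ = 1, range equal to the annihilator Y^⊥, and finite-dimensional kernel. If Y^⊥ has the w*-BDP, then X* has the w*-BDP. -/
open Metric NormedSpace ENNReal

open Metric NormedSpace Filter Bornology
open scoped RealInnerProductSpace Topology

/-- An element of the closure of a set of reals is at most its sSup. -/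
lemma le_csSup_of_mem_closure' {S : Set ℝ} (hb : BddAbove S) {a : ℝ}
    (ha : a ∈ closure S) : a ≤ sSup S := by
  have h : sSup S ∈ upperBounds (closure S) := by
    rw [upperBounds_closure]
    exact fun x hx => le_csSup hb hx
  exact h ha

/-- Finite-dimensional localization lemma: in a compact subset `K` of `ℝ × V` with
first coordinates bounded by `s` (attained), one can find `v₀` and a linear perturbation
`p ↦ p.1 + t * ⟪p.2, v₀⟫` whose near-maximizers on `K` have first coordinate near `s`
and second coordinate near `v₀`. -/
lemma fd_localize {d : ℕ} {K : Set (ℝ × EuclideanSpace ℝ (Fin d))} (hK : IsCompact K)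
    {s : ℝ} (hub : ∀ p ∈ K, p.1 ≤ s) (hmem : ∃ v, (s, v) ∈ K)
    {α ε : ℝ} (hα : 0 < α) (hε : 0 < ε) :
    ∃ (v₀ : EuclideanSpace ℝ (Fin d)) (t β : ℝ), 0 < t ∧ 0 < β ∧ (s, v₀) ∈ K ∧
      ∀ p ∈ K, s + t * ⟪v₀, v₀⟫ - β < p.1 + t * ⟪p.2, v₀⟫ →
        s - α < p.1 ∧ ‖p.2 - v₀‖ < ε := by
  obtain ⟨R, hR⟩ := isBounded_iff_forall_norm_le.mp hK.isBounded
  -- the face at maximal first coordinate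
  set K₀ : Set (EuclideanSpace ℝ (Fin d)) := {v | (s, v) ∈ K} with hK₀def
  have hK₀c : IsCompact K₀ := by
    apply isCompact_of_isClosed_isBounded
    · exact hK.isClosed.preimage (Continuous.prodMk_right s)
    · apply isBounded_iff_forall_norm_le.mpr ⟨R, fun v hv => ?_⟩
      exact le_trans (norm_snd_le ((s, v) : ℝ × EuclideanSpace ℝ (Fin d))) (hR _ hv)
  have hK₀ne : K₀.Nonempty := hmem
  obtain ⟨v₀, hv₀K₀, hv₀max⟩ := hK₀c.exists_isMaxOn hK₀ne continuous_norm.continuousOn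
  refine ⟨v₀, ?_⟩
  have hmemv₀ : (s, v₀) ∈ K := hv₀K₀
  by_contra hcon
  push_neg at hcon
  have hcon' : ∀ t β : ℝ, 0 < t → 0 < β →
      ∃ p ∈ K, (s + t * ⟪v₀, v₀⟫ - β < p.1 + t * ⟪p.2, v₀⟫ ∧
        (s - α < p.1 → ε ≤ ‖p.2 - v₀‖)) := by
    intro t β ht hβ
    exact hcon t β ht hβ hmemv₀
  set tk : ℕ → ℝ := fun k => 1 / (k + 1) with htkdef
  have htkpos : ∀ k : ℕ, 0 < tk k := by
    intro k; positivity
  choose p hpK hineq hbad using fun k : ℕ =>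
    hcon' (tk k) (tk k * tk k) (htkpos k) (mul_pos (htkpos k) (htkpos k))
  obtain ⟨q, hqK, φ, hφmono, hφtend⟩ := hK.tendsto_subseq hpK
  have htfst : Tendsto (fun k => (p (φ k)).1) atTop (𝓝 q.1) :=
    (continuous_fst.tendsto q).comp hφtend
  have htsnd : Tendsto (fun k => (p (φ k)).2) atTop (𝓝 q.2) :=
    (continuous_snd.tendsto q).comp hφtend
  have ht0 : Tendsto (fun k => tk (φ k)) atTop (𝓝 0) :=
    tendsto_one_div_add_atTop_nhds_zero_nat.comp hφmono.tendsto_atTop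
  have hps : ∀ k, (p k).1 ≤ s := fun k => hub _ (hpK k)
  have hIbound : ∀ k, |⟪(p k).2, v₀⟫| ≤ R * ‖v₀‖ := by
    intro k
    calc |⟪(p k).2, v₀⟫| ≤ ‖(p k).2‖ * ‖v₀‖ := abs_real_inner_le_norm _ _
    _ ≤ R * ‖v₀‖ := by
        have h1 : ‖(p k).2‖ ≤ R := le_trans (norm_snd_le (p k)) (hR _ (hpK k))
        exact mul_le_mul_of_nonneg_right h1 (norm_nonneg _)
  -- first coordinate of limit is s
  have hq1 : q.1 = s := by
    refine le_antisymm (hub _ hqK) ?_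
    have hlow : ∀ k, s - (R * ‖v₀‖ + ⟪v₀, v₀⟫) * tk (φ k) - tk (φ k) * tk (φ k)
        ≤ (p (φ k)).1 := by
      intro k
      have h := hineq (φ k)
      have h2 := hIbound (φ k)
      have h3 := abs_le.mp h2
      have ht := (htkpos (φ k)).le
      nlinarith [mul_nonneg ht (sub_nonneg.mpr h3.2), mul_nonneg ht (real_inner_self_nonneg (x := v₀))]
    have htend : Tendsto (fun k => s - (R * ‖v₀‖ + ⟪v₀, v₀⟫) * tk (φ k)
        - tk (φ k) * tk (φ k)) atTop (𝓝 s) := by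
      have : Tendsto (fun k => s - (R * ‖v₀‖ + ⟪v₀, v₀⟫) * tk (φ k)
          - tk (φ k) * tk (φ k)) atTop (𝓝 (s - (R * ‖v₀‖ + ⟪v₀, v₀⟫) * 0 - 0 * 0)) :=
        (tendsto_const_nhds.sub (ht0.const_mul _)).sub (ht0.mul ht0)
      simpa using this
    exact le_of_tendsto_of_tendsto' htend htfst hlow
  -- the inner product inequality in the limit
  have hIk : ∀ k, ⟪v₀, v₀⟫ - tk k ≤ ⟪(p k).2, v₀⟫ := by
    intro k
    by_contra hle
    push_neg at hle
    have h2 : tk k * ⟪(p k).2, v₀⟫ ≤ tk k * (⟪v₀, v₀⟫ - tk k) :=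
      mul_le_mul_of_nonneg_left hle.le (htkpos k).le
    rw [mul_sub] at h2
    have h := hineq k
    have h3 := hps k
    linarith
  have hIlim : ⟪v₀, v₀⟫ ≤ ⟪q.2, v₀⟫ := by
    have h1 : Tendsto (fun k => ⟪v₀, v₀⟫ - tk (φ k)) atTop (𝓝 (⟪v₀, v₀⟫ - 0)) :=
      tendsto_const_nhds.sub ht0
    have h2 : Tendsto (fun k => ⟪(p (φ k)).2, v₀⟫) atTop (𝓝 ⟪q.2, v₀⟫) :=
      htsnd.inner tendsto_const_nhds
    have := le_of_tendsto_of_tendsto' h1 h2 (fun k => hIk (φ k))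
    simpa using this
  -- conclude q.2 = v₀
  have hq2K₀ : q.2 ∈ K₀ := by
    have : (s, q.2) = q := by
      rw [← hq1]
    rw [hK₀def]; simp only [Set.mem_setOf_eq]; rw [this]; exact hqK
  have hq2norm : ‖q.2‖ ≤ ‖v₀‖ := hv₀max hq2K₀
  have hq2 : q.2 = v₀ := by
    have hsq : ‖q.2 - v₀‖ ^ 2 ≤ 0 := by
      rw [norm_sub_sq_real]
      have h1 : ⟪v₀, v₀⟫ = ‖v₀‖ ^ 2 := real_inner_self_eq_norm_sq v₀
      have h2 : ‖q.2‖ ^ 2 ≤ ‖v₀‖ ^ 2 :=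
        pow_le_pow_left₀ (norm_nonneg _) hq2norm 2
      linarith [hIlim]
    have : ‖q.2 - v₀‖ ^ 2 = 0 := le_antisymm hsq (sq_nonneg _)
    have := (pow_eq_zero_iff (by norm_num : (2:ℕ) ≠ 0)).mp this
    exact sub_eq_zero.mp (norm_eq_zero.mp this)
  -- final contradiction
  have ev1 : ∀ᶠ k in atTop, s - α < (p (φ k)).1 := by
    apply htfst.eventually
    rw [hq1]
    exact eventually_gt_nhds (by linarith)
  have ev2 : ∀ᶠ k in atTop, ‖(p (φ k)).2 - v₀‖ < ε := by
    have h : Tendsto (fun k => ‖(p (φ k)).2 - v₀‖) atTop (𝓝 ‖q.2 - v₀‖) :=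
      (htsnd.sub tendsto_const_nhds).norm
    rw [hq2, sub_self, norm_zero] at h
    exact h.eventually (eventually_lt_nhds hε)
  obtain ⟨k, h1, h2⟩ := (ev1.and ev2).exists
  exact absurd (hbad (φ k) h1) (not_le.mpr h2)

section Main

open Filter Bornology
open scoped RealInnerProductSpace Topology

set_option synthInstance.maxHeartbeats 400000 in
set_option maxHeartbeats 2000000 in
/-- If `P : X* → X*` is a norm one continuous linear projection with range `Y^⊥`
and finite-dimensional kernel, and `Y^⊥` has the w*-BDP, then `X*` has the w*-BDP. -/
theorem statement_14 (X : Type*) [NormedAddCommGroup X] [NormedSpace ℝ X] [CompleteSpace X]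
    (Y : Submodule ℝ X) (hY : IsClosed (Y : Set X))
    (P : StrongDual ℝ X →L[ℝ] StrongDual ℝ X) (hProj : ∀ f, P (P f) = P f) (hPnorm : ‖P‖ = 1)
    (hrange : LinearMap.range (P : StrongDual ℝ X →ₗ[ℝ] StrongDual ℝ X) = annih Y)
    (hker : FiniteDimensional ℝ (LinearMap.ker (P : StrongDual ℝ X →ₗ[ℝ] StrongDual ℝ X)))
    (hBDP : SubWStarBDP (annih Y)) :
    WStarBDP X := by
  intro ε hε
  classical
  haveI : FiniteDimensional ℝ ↥(LinearMap.ker (P : StrongDual ℝ X →ₗ[ℝ] StrongDual ℝ X)) := hker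
  haveI : Module.Free ℝ ↥(LinearMap.ker (P : StrongDual ℝ X →ₗ[ℝ] StrongDual ℝ X)) := Module.Free.of_divisionRing ℝ (LinearMap.ker (P : StrongDual ℝ X →ₗ[ℝ] StrongDual ℝ X))
  -- basic facts about the projection
  have hPmem : ∀ f : StrongDual ℝ X, P f ∈ annih Y := by
    intro f
    rw [← hrange]
    exact LinearMap.mem_range.mpr ⟨f, rfl⟩
  have hPfix : ∀ f ∈ annih Y, P f = f := by
    intro f hf
    rw [← hrange] at hf
    obtain ⟨g, hg⟩ := LinearMap.mem_range.mp hf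
    rw [← hg]; exact hProj g
  have hPball : ∀ f : StrongDual ℝ X, ‖f‖ ≤ 1 → ‖P f‖ ≤ 1 := by
    intro f hf
    calc ‖P f‖ ≤ ‖P‖ * ‖f‖ := P.le_opNorm f
    _ ≤ 1 := by rw [hPnorm]; linarith
  -- the kernel, a finite-dimensional subspace
  have hQmem : ∀ f : StrongDual ℝ X, (ContinuousLinearMap.id ℝ (StrongDual ℝ X) - P) f ∈ LinearMap.ker (P : StrongDual ℝ X →ₗ[ℝ] StrongDual ℝ X) := by
    intro f
    rw [LinearMap.mem_ker]
    simp [map_sub, hProj]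
  let Qn : StrongDual ℝ X →L[ℝ] ↥(LinearMap.ker (P : StrongDual ℝ X →ₗ[ℝ] StrongDual ℝ X)) :=
    (ContinuousLinearMap.id ℝ (StrongDual ℝ X) - P).codRestrict (LinearMap.ker (P : StrongDual ℝ X →ₗ[ℝ] StrongDual ℝ X)) hQmem
  have hQn : ∀ f : StrongDual ℝ X, ((Qn f : StrongDual ℝ X)) = f - P f := fun f => rfl
  -- elements of the kernel vanishing on Y are zero
  have hNzero : ∀ n : ↥(LinearMap.ker (P : StrongDual ℝ X →ₗ[ℝ] StrongDual ℝ X)), ((n : StrongDual ℝ X) ∈ annih Y) → n = 0 := by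
    intro n hn
    have h1 : P (n : StrongDual ℝ X) = n := hPfix _ hn
    have h2 : P (n : StrongDual ℝ X) = 0 := LinearMap.mem_ker.mp n.2
    exact Subtype.ext (by rw [← h1, h2]; simp)
  -- the evaluation map from Y to the dual of the kernel, and its surjectivity
  let T : ↥Y →ₗ[ℝ] Module.Dual ℝ ↥(LinearMap.ker (P : StrongDual ℝ X →ₗ[ℝ] StrongDual ℝ X)) :=
    { toFun := fun y =>
        { toFun := fun n => (n : StrongDual ℝ X) (y : X)
          map_add' := by intros; simp
          map_smul' := by intros; simp }
      map_add' := by intros; ext n; simp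
      map_smul' := by intros; ext n; simp }
  have hTsurj : Function.Surjective T := by
    rw [← LinearMap.range_eq_top]
    by_contra hne
    obtain ⟨φ, hφne, hφ⟩ := Submodule.exists_dual_map_eq_bot_of_lt_top
      (lt_top_iff_ne_top.mpr hne) inferInstance
    set n : ↥(LinearMap.ker (P : StrongDual ℝ X →ₗ[ℝ] StrongDual ℝ X)) := (Module.evalEquiv ℝ ↥(LinearMap.ker (P : StrongDual ℝ X →ₗ[ℝ] StrongDual ℝ X))).symm φ with hn
    have hzero : ∀ y : ↥Y, (n : StrongDual ℝ X) (y : X) = 0 := by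
      intro y
      have h1 : (T y) n = φ (T y) := by
        rw [hn]
        exact Module.apply_evalEquiv_symm_apply ℝ ↥(LinearMap.ker (P : StrongDual ℝ X →ₗ[ℝ] StrongDual ℝ X)) (T y) φ
      have h2 : φ (T y) = 0 := by
        have hmem : φ (T y) ∈ Submodule.map φ (LinearMap.range T) :=
          Submodule.mem_map_of_mem (LinearMap.mem_range_self T y)
        rw [hφ] at hmem
        simpa using hmem
      exact h1.trans h2
    have hn0 : n = 0 := hNzero n (fun y hy => hzero ⟨y, hy⟩)
    apply hφne
    have heq : φ = Module.evalEquiv ℝ ↥(LinearMap.ker (P : StrongDual ℝ X →ₗ[ℝ] StrongDual ℝ X)) n := by rw [hn]; simp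
    rw [heq, hn0, map_zero]
  have hsurj : ∀ ψ : Module.Dual ℝ ↥(LinearMap.ker (P : StrongDual ℝ X →ₗ[ℝ] StrongDual ℝ X)),
      ∃ y, y ∈ Y ∧ ∀ n : ↥(LinearMap.ker (P : StrongDual ℝ X →ₗ[ℝ] StrongDual ℝ X)), (n : StrongDual ℝ X) y = ψ n := by
    intro ψ
    obtain ⟨y, hy⟩ := hTsurj ψ
    exact ⟨y, y.2, fun n => by rw [← hy]; rfl⟩
  -- the small slice of the ball of Y^⊥
  obtain ⟨z, α, hα, hdiamS⟩ := hBDP (ε / 3) (by positivity)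
  set sM : ℝ := sSup ((fun g : StrongDual ℝ X => g z) '' subBall (annih Y)) with hsMdef
  have hsubne : ((fun g : StrongDual ℝ X => g z) '' subBall (annih Y)).Nonempty :=
    ⟨0, ⟨0, ⟨(annih Y).zero_mem, by simp⟩, rfl⟩⟩
  have hsubbdd : BddAbove ((fun g : StrongDual ℝ X => g z) '' subBall (annih Y)) := by
    refine ⟨‖z‖, ?_⟩
    rintro _ ⟨g, ⟨hgmem, hgnorm⟩, rfl⟩
    calc g z ≤ ‖g z‖ := le_abs_self _
    _ ≤ ‖g‖ * ‖z‖ := g.le_opNorm z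
    _ ≤ 1 * ‖z‖ := mul_le_mul_of_nonneg_right hgnorm (norm_nonneg _)
    _ = ‖z‖ := one_mul _
  -- transfer to Euclidean coordinates on the kernel
  let e : ↥(LinearMap.ker (P : StrongDual ℝ X →ₗ[ℝ] StrongDual ℝ X)) ≃L[ℝ]
      EuclideanSpace ℝ (Fin (Module.finrank ℝ ↥(LinearMap.ker (P : StrongDual ℝ X →ₗ[ℝ] StrongDual ℝ X)))) := toEuclidean (E := ↥(LinearMap.ker (P : StrongDual ℝ X →ₗ[ℝ] StrongDual ℝ X)))
  let eL : StrongDual ℝ X →L[ℝ] EuclideanSpace ℝ (Fin (Module.finrank ℝ ↥(LinearMap.ker (P : StrongDual ℝ X →ₗ[ℝ] StrongDual ℝ X)))) := (e : ↥(LinearMap.ker (P : StrongDual ℝ X →ₗ[ℝ] StrongDual ℝ X)) →L[ℝ] EuclideanSpace ℝ (Fin (Module.finrank ℝ ↥(LinearMap.ker (P : StrongDual ℝ X →ₗ[ℝ] StrongDual ℝ X))))).comp Qn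
  let eLsymm : EuclideanSpace ℝ (Fin (Module.finrank ℝ ↥(LinearMap.ker (P : StrongDual ℝ X →ₗ[ℝ] StrongDual ℝ X)))) →L[ℝ] StrongDual ℝ X :=
    (LinearMap.ker (P : StrongDual ℝ X →ₗ[ℝ] StrongDual ℝ X)).subtypeL.comp (e.symm : EuclideanSpace ℝ (Fin (Module.finrank ℝ ↥(LinearMap.ker (P : StrongDual ℝ X →ₗ[ℝ] StrongDual ℝ X)))) →L[ℝ] ↥(LinearMap.ker (P : StrongDual ℝ X →ₗ[ℝ] StrongDual ℝ X)))
  let Φ : StrongDual ℝ X → ℝ × EuclideanSpace ℝ (Fin (Module.finrank ℝ ↥(LinearMap.ker (P : StrongDual ℝ X →ₗ[ℝ] StrongDual ℝ X)))) :=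
    fun f => ((P f) z, e (Qn f))
  set K := Φ '' closedBall (0 : StrongDual ℝ X) 1 with hKdef
  set K' := closure K with hK'def
  have hKne : K.Nonempty := ⟨Φ 0, ⟨0, mem_closedBall_self zero_le_one, rfl⟩⟩
  have hKb : IsBounded K := by
    rw [isBounded_iff_forall_norm_le]
    refine ⟨max ‖z‖ (‖eL‖ * (1 + ‖P‖)), ?_⟩
    rintro _ ⟨f, hf, rfl⟩
    have hf1 : ‖f‖ ≤ 1 := mem_closedBall_zero_iff.mp hf
    rw [Prod.norm_def]
    apply max_le_max
    · calc ‖(P f) z‖ ≤ ‖P f‖ * ‖z‖ := (P f).le_opNorm z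
      _ ≤ 1 * ‖z‖ := mul_le_mul_of_nonneg_right (hPball f hf1) (norm_nonneg _)
      _ = ‖z‖ := one_mul _
    · have hb : ‖Qn f‖ ≤ 1 + ‖P‖ := by
        have h1 : ‖(Qn f : StrongDual ℝ X)‖ ≤ 1 + ‖P‖ := by
          rw [hQn]
          calc ‖f - P f‖ ≤ ‖f‖ + ‖P f‖ := norm_sub_le _ _
          _ ≤ 1 + ‖P‖ := by
              have h2 := P.le_opNorm f
              have h3 : ‖P‖ * ‖f‖ ≤ ‖P‖ * 1 :=
                mul_le_mul_of_nonneg_left hf1 (norm_nonneg P)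
              nlinarith [norm_nonneg P]
        exact h1
      calc ‖e (Qn f)‖ ≤ ‖eL‖ * ‖f‖ := eL.le_opNorm f
      _ ≤ ‖eL‖ * (1 + ‖P‖) := mul_le_mul_of_nonneg_left (by linarith [norm_nonneg P]) (norm_nonneg eL)
  have hK'c : IsCompact K' := hKb.isCompact_closure
  have hK'ne : K'.Nonempty := hKne.closure
  -- the maximum of the first coordinate over K' is sM
  have hubK : ∀ p ∈ K, p.1 ≤ sM := by
    rintro _ ⟨f, hf, rfl⟩
    apply le_csSup hsubbdd
    exact ⟨P f, ⟨hPmem f, hPball f (mem_closedBall_zero_iff.mp hf)⟩, rfl⟩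
  have hubK' : ∀ p ∈ K', p.1 ≤ sM := by
    intro p hp
    exact closure_minimal hubK (isClosed_le continuous_fst continuous_const) hp
  obtain ⟨phat, hphatK', hphatmax⟩ := hK'c.exists_isMaxOn hK'ne continuous_fst.continuousOn
  have hphat1 : phat.1 = sM := by
    refine le_antisymm (hubK' _ hphatK') ?_
    apply csSup_le hsubne
    rintro _ ⟨g, ⟨hgY, hgn⟩, rfl⟩
    have hgB : g ∈ closedBall (0 : StrongDual ℝ X) 1 := mem_closedBall_zero_iff.mpr hgn
    have hmax : (Φ g).1 ≤ phat.1 := hphatmax (subset_closure (⟨g, hgB, rfl⟩ : Φ g ∈ K))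
    have hfst : (Φ g).1 = g z := by simp only [Φ, hPfix g hgY]
    rw [hfst] at hmax
    exact hmax
  have hmemsM : ((sM, phat.2) : ℝ × _) ∈ K' := by
    rw [← hphat1]
    simpa using hphatK'
  -- apply the finite-dimensional localization lemma
  set Ce : ℝ := ‖eLsymm‖ with hCedef
  have hCe0 : 0 ≤ Ce := by rw [hCedef]; exact norm_nonneg eLsymm
  set ε' : ℝ := ε / (6 * (Ce + 1)) with hε'def
  have hε'pos : 0 < ε' := by
    rw [hε'def]; positivity
  obtain ⟨v₀, t, β, ht, hβ, hv₀K', hloc⟩ :=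
    fd_localize hK'c hubK' ⟨phat.2, hmemsM⟩ hα hε'pos
  -- choose the perturbation vectors in Y
  let ψ₁ : Module.Dual ℝ ↥(LinearMap.ker (P : StrongDual ℝ X →ₗ[ℝ] StrongDual ℝ X)) :=
    { toFun := fun n => (n : StrongDual ℝ X) z
      map_add' := by intros; simp
      map_smul' := by intros; simp }
  obtain ⟨y₁, hy₁Y, hy₁⟩ := hsurj ψ₁
  let ψ₂ : Module.Dual ℝ ↥(LinearMap.ker (P : StrongDual ℝ X →ₗ[ℝ] StrongDual ℝ X)) :=
    { toFun := fun n => (inner ℝ (e n) v₀ : ℝ)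
      map_add' := by
        intro a b
        simp only [map_add]
        exact inner_add_left _ _ _
      map_smul' := by
        intro c n
        simp only [map_smul, RingHom.id_apply]
        exact real_inner_smul_left _ _ _ }
  obtain ⟨y₂, hy₂Y, hy₂⟩ := hsurj ψ₂
  set x := z - y₁ + t • y₂ with hxdef
  -- key evaluation identity
  have hkey : ∀ f : StrongDual ℝ X, f x = (P f) z + t * (inner ℝ (e (Qn f)) v₀ : ℝ) := by
    intro f
    have hPf₁ : (P f) y₁ = 0 := (hPmem f) y₁ hy₁Y
    have hPf₂ : (P f) y₂ = 0 := (hPmem f) y₂ hy₂Y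
    have hn₁ := hy₁ (Qn f)
    have hn₂ := hy₂ (Qn f)
    rw [hQn] at hn₁ hn₂
    have hψ₁ : ψ₁ (Qn f) = (Qn f : StrongDual ℝ X) z := rfl
    rw [hψ₁, hQn] at hn₁
    have hψ₂ : ψ₂ (Qn f) = (inner ℝ (e (Qn f)) v₀ : ℝ) := rfl
    rw [hψ₂] at hn₂
    simp only [ContinuousLinearMap.sub_apply] at hn₁ hn₂
    have h1 : f y₁ = f z - (P f) z := by linarith [hn₁, hPf₁]

    have h2 : f y₂ = (inner ℝ (e (Qn f)) v₀ : ℝ) := by linarith [hn₂, hPf₂]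
    rw [hxdef, map_add, map_sub, map_smul, smul_eq_mul, h1, h2]
    ring
  -- identify the sup of the new slice functional
  have hcomp : (fun f : StrongDual ℝ X => f x)
      = fun f => (Φ f).1 + t * (inner ℝ (Φ f).2 v₀ : ℝ) := by
    funext f; exact hkey f
  have himg : (fun f : StrongDual ℝ X => f x) '' closedBall 0 1
      = (fun p : ℝ × EuclideanSpace ℝ _ => p.1 + t * (inner ℝ p.2 v₀ : ℝ)) '' K := by
    rw [hKdef, Set.image_image, hcomp]
  have hBbdd : BddAbove ((fun f : StrongDual ℝ X => f x) '' closedBall 0 1) := by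
    refine ⟨‖x‖, ?_⟩
    rintro _ ⟨f, hf, rfl⟩
    have hf1 : ‖f‖ ≤ 1 := mem_closedBall_zero_iff.mp hf
    calc f x ≤ ‖f x‖ := le_abs_self _
    _ ≤ ‖f‖ * ‖x‖ := f.le_opNorm x
    _ ≤ 1 * ‖x‖ := mul_le_mul_of_nonneg_right hf1 (norm_nonneg _)
    _ = ‖x‖ := one_mul _
  have hslb : sM + t * (inner ℝ v₀ v₀ : ℝ)
      ≤ sSup ((fun f : StrongDual ℝ X => f x) '' closedBall 0 1) := by
    apply le_csSup_of_mem_closure' hBbdd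
    rw [himg]
    have hcont : Continuous (fun p : ℝ × EuclideanSpace ℝ _ => p.1 + t * (inner ℝ p.2 v₀ : ℝ)) :=
      continuous_fst.add (continuous_const.mul (continuous_snd.inner continuous_const))
    have h1 : sM + t * (inner ℝ v₀ v₀ : ℝ)
        ∈ (fun p : ℝ × EuclideanSpace ℝ _ => p.1 + t * (inner ℝ p.2 v₀ : ℝ)) '' K' :=
      Set.mem_image_of_mem _ hv₀K'
    have h2 : (fun p : ℝ × EuclideanSpace ℝ _ => p.1 + t * (inner ℝ p.2 v₀ : ℝ)) '' K'
        ⊆ closure ((fun p : ℝ × EuclideanSpace ℝ _ => p.1 + t * (inner ℝ p.2 v₀ : ℝ)) '' K) := by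
      rw [hK'def]
      exact image_closure_subset_closure_image hcont
    exact h2 h1
  -- the resulting slice of the ball of X* works
  refine ⟨x, β, hβ, ?_⟩
  have hslice : ∀ f ∈ wStarSlice X x β,
      P f ∈ subWStarSlice (annih Y) z α ∧ ‖e (Qn f) - v₀‖ < ε' := by
    rintro f ⟨hfB, hfgt⟩
    have hΦK' : Φ f ∈ K' := subset_closure ⟨f, hfB, rfl⟩
    have hineq : sM + t * (inner ℝ v₀ v₀ : ℝ) - β < (Φ f).1 + t * (inner ℝ (Φ f).2 v₀ : ℝ) := by
      have h1 := hkey f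
      have : sSup ((fun g : StrongDual ℝ X => g x) '' closedBall 0 1) - β < f x := hfgt
      linarith [hslb]
    obtain ⟨h1, h2⟩ := hloc _ hΦK' hineq
    refine ⟨⟨⟨hPmem f, hPball f (mem_closedBall_zero_iff.mp hfB)⟩, ?_⟩, h2⟩
    rw [← hsMdef]
    exact h1
  have hSbounded : IsBounded (subWStarSlice (annih Y) z α) := by
    apply (isBounded_closedBall (x := (0 : StrongDual ℝ X)) (r := 1)).subset
    rintro g ⟨⟨_, hgn⟩, _⟩
    exact mem_closedBall_zero_iff.mpr hgn
  have hpair : ∀ f ∈ wStarSlice X x β, ∀ f' ∈ wStarSlice X x β,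
      dist f f' ≤ 2 * ε / 3 := by
    intro f hf f' hf'
    obtain ⟨hfS, hfe⟩ := hslice f hf
    obtain ⟨hf'S, hf'e⟩ := hslice f' hf'
    have hPd : ‖P f - P f'‖ < ε / 3 := by
      rw [← dist_eq_norm]
      exact lt_of_le_of_lt (dist_le_diam_of_mem hSbounded hfS hf'S) hdiamS
    have hQd : ‖(f - P f) - (f' - P f')‖ ≤ Ce * (2 * ε') := by
      have h0 : (f - P f) - (f' - P f') = ((Qn f - Qn f' : ↥(LinearMap.ker (P : StrongDual ℝ X →ₗ[ℝ] StrongDual ℝ X))) : StrongDual ℝ X) := by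
        rw [Submodule.coe_sub, hQn, hQn]
      rw [h0]
      have h1 : ‖((Qn f - Qn f' : ↥(LinearMap.ker (P : StrongDual ℝ X →ₗ[ℝ] StrongDual ℝ X))) : StrongDual ℝ X)‖ = ‖Qn f - Qn f'‖ := rfl
      rw [h1]
      have h2 : Qn f - Qn f' = e.symm (e (Qn f) - e (Qn f')) := by
        rw [map_sub]
        simp
      rw [h2]
      calc ‖e.symm (e (Qn f) - e (Qn f'))‖
          ≤ Ce * ‖e (Qn f) - e (Qn f')‖ := eLsymm.le_opNorm _
      _ ≤ Ce * (2 * ε') := by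
          have htri : ‖e (Qn f) - e (Qn f')‖ ≤ ‖e (Qn f) - v₀‖ + ‖v₀ - e (Qn f')‖ := by
            have hd := dist_triangle (e (Qn f)) v₀ (e (Qn f'))
            simpa [dist_eq_norm] using hd
          have h3 : ‖v₀ - e (Qn f')‖ < ε' := by
            rw [norm_sub_rev]
            exact hf'e
          have h4 : ‖e (Qn f) - e (Qn f')‖ ≤ 2 * ε' := by linarith
          exact mul_le_mul_of_nonneg_left h4 hCe0
    have hdec : f - f' = (P f - P f') + ((f - P f) - (f' - P f')) := by abel
    calc dist f f' = ‖f - f'‖ := dist_eq_norm _ _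
    _ ≤ ‖P f - P f'‖ + ‖(f - P f) - (f' - P f')‖ := by
        rw [hdec]; exact norm_add_le _ _
    _ ≤ ε / 3 + Ce * (2 * ε') := add_le_add hPd.le hQd
    _ ≤ 2 * ε / 3 := by
        have hkey2 : Ce * (2 * ε') ≤ ε / 3 := by
          rw [hε'def]
          have h6 : (0:ℝ) < 6 * (Ce + 1) := by positivity
          rw [show Ce * (2 * (ε / (6 * (Ce + 1)))) = (2 * Ce * ε) / (6 * (Ce + 1)) by ring]
          rw [div_le_div_iff₀ h6 (by norm_num : (0:ℝ) < 3)]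
          nlinarith [hε.le, hCe0, mul_nonneg hCe0 hε.le]
        linarith
  have hdiam := diam_le_of_forall_dist_le (by positivity : (0:ℝ) ≤ 2 * ε / 3) hpair
  calc diam (wStarSlice X x β) ≤ 2 * ε / 3 := hdiam
  _ < ε := by linarith

end Main
end

section
/- Let X be a real Banach space and Y a closed subspace of X such that the quotient space X*/Y^⊥ is finite dimensional. If the annihilator Y^⊥ has the w*-BHP, then X* has the w*-BHP. -/
open Metric NormedSpace ENNReal

section Aux

variable {X : Type*} [NormedAddCommGroup X] [NormedSpace ℝ X]

/-- The restriction map `X* → Y*` as a linear map. -/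
noncomputable def restrL (Y : Submodule ℝ X) : StrongDual ℝ X →ₗ[ℝ] StrongDual ℝ Y where
  toFun f := f.comp Y.subtypeL
  map_add' f g := by ext y; simp
  map_smul' c f := by ext y; simp

lemma restrL_apply (Y : Submodule ℝ X) (f : StrongDual ℝ X) (y : Y) :
    restrL Y f y = f (y : X) := rfl

lemma restrL_surj (Y : Submodule ℝ X) : Function.Surjective (restrL Y) := by
  intro φ
  obtain ⟨g, hg, -⟩ := exists_extension_norm_eq Y φ
  exact ⟨g, by ext y; exact hg y⟩

lemma dualY_fd (Y : Submodule ℝ X) (hfin : FiniteDimensional ℝ (StrongDual ℝ X ⧸ annih Y)) :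
    FiniteDimensional ℝ (StrongDual ℝ Y) := by
  have h0 : annih Y ≤ LinearMap.ker (restrL Y) := by
    intro f hf
    ext y
    simpa [restrL_apply] using hf (y : X) y.2
  have hs : Function.Surjective ((annih Y).liftQ (restrL Y) h0) := by
    intro φ
    obtain ⟨f, hf⟩ := restrL_surj Y φ
    exact ⟨Submodule.Quotient.mk f, by simpa using hf⟩
  exact Module.Finite.of_surjective _ hs

lemma restr_wcont (Y : Submodule ℝ X) (hfd : FiniteDimensional ℝ (StrongDual ℝ Y)) :
    Continuous fun p : WeakDual ℝ X => restrL Y (WeakDual.toStrongDual p) := by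
  haveI : FiniteDimensional ℝ (WeakDual ℝ Y) := hfd
  have h1 : Continuous fun p : WeakDual ℝ X =>
      (StrongDual.toWeakDual (restrL Y (WeakDual.toStrongDual p)) : WeakDual ℝ Y) :=
    WeakDual.continuous_of_continuous_eval fun y => WeakDual.eval_continuous (y : X)
  have h2 : Continuous fun q : WeakDual ℝ Y => (WeakDual.toStrongDual q : StrongDual ℝ Y) :=
    LinearMap.continuous_of_finiteDimensional
      ({ toFun := fun q => WeakDual.toStrongDual q,
         map_add' := fun _ _ => rfl,
         map_smul' := fun _ _ => rfl } : WeakDual ℝ Y →ₗ[ℝ] StrongDual ℝ Y)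
  exact h2.comp h1

end Aux

set_option maxHeartbeats 1600000 in
/-- If `Y` is a closed subspace of a Banach space `X` with `X*/Y^⊥` finite
dimensional and `Y^⊥` has the w*-BHP, then `X*` has the w*-BHP. -/
theorem statement_16 (X : Type*) [NormedAddCommGroup X] [NormedSpace ℝ X] [CompleteSpace X]
    (Y : Submodule ℝ X) (hY : IsClosed (Y : Set X))
    (hfin : FiniteDimensional ℝ (StrongDual ℝ X ⧸ annih Y))
    (hBHP : SubWStarBHP (annih Y)) :
    WStarBHP X := by
  have hfdY : FiniteDimensional ℝ (StrongDual ℝ Y) := dualY_fd Y hfin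
  intro ε hε
  obtain ⟨V, ⟨U₀, hU₀open, hVeq⟩, ⟨f₀, hf₀V⟩, hVdiam⟩ := hBHP (ε/2) (by linarith)
  rw [hVeq] at hf₀V
  obtain ⟨⟨hf₀F, hf₀n⟩, hf₀U⟩ := hf₀V
  have hws := (topDualPairing ℝ X).weakBilin_withSeminorms
  have hnb : U₀ ∈ nhds (StrongDual.toWeakDual f₀) := hU₀open.mem_nhds hf₀U
  replace hnb := (hws.mem_nhds_iff (StrongDual.toWeakDual f₀) U₀).mp hnb
  obtain ⟨s, r, hr, hball⟩ := hnb
  set M : ℝ := 1 + ∑ x ∈ s, ‖x‖ with hM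
  have hsum : (0:ℝ) ≤ ∑ x ∈ s, ‖x‖ := Finset.sum_nonneg fun x _ => norm_nonneg x
  have hMpos : 0 < M := by rw [hM]; linarith
  have hxM : ∀ x ∈ s, ‖x‖ ≤ M := fun x hx => by
    have h1 : ‖x‖ ≤ ∑ y ∈ s, ‖y‖ := Finset.single_le_sum (fun y _ => norm_nonneg y) hx
    rw [hM]; linarith
  set δ : ℝ := min (ε/8) (r/(4*M)) with hδ
  have hδpos : 0 < δ := lt_min (by linarith) (by positivity)
  have hδε : δ ≤ ε/8 := min_le_left _ _
  have hδr : 2*δ*M ≤ r/2 := by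
    have h1 : δ ≤ r/(4*M) := min_le_right _ _
    have h2 : δ * (4*M) ≤ r := (le_div_iff₀ (by positivity : (0:ℝ) < 4*M)).mp h1
    nlinarith
  set U : Set (WeakDual ℝ X) :=
    {p | ‖restrL Y (WeakDual.toStrongDual p)‖ < δ} ∩
      ⋂ x ∈ s, {p : WeakDual ℝ X | ‖p x - f₀ x‖ < r/2} with hU
  have hUopen : IsOpen U := by
    apply IsOpen.inter
    · exact isOpen_lt ((continuous_norm (E := StrongDual ℝ Y)).comp (restr_wcont Y hfdY)) continuous_const
    · exact isOpen_biInter_finset fun x _ =>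
        isOpen_lt (continuous_norm.comp
          ((WeakDual.eval_continuous x).sub continuous_const)) continuous_const
  set W : Set (StrongDual ℝ X) :=
    {f | f ∈ closedBall (0 : StrongDual ℝ X) 1 ∧ StrongDual.toWeakDual f ∈ U} with hW
  have key : ∀ g ∈ W, ∃ f ∈ V, ‖g - f‖ ≤ 2*δ := by
    rintro g ⟨hg1, hgδ, hgB⟩
    have hgnorm : ‖g‖ ≤ 1 := mem_closedBall_zero_iff.mp hg1
    have hgδ' : ‖restrL Y g‖ < δ := hgδ
    obtain ⟨h, hhext, hhnorm⟩ := exists_extension_norm_eq Y (restrL Y g)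
    have hhδ : ‖h‖ < δ := by rw [hhnorm]; exact hgδ'
    have hgh_mem : (g - h) ∈ annih Y := by
      show ∀ y ∈ Y, (g - h) y = 0
      intro y hy
      have h1 := hhext ⟨y, hy⟩
      simp only [restrL_apply] at h1
      simp [h1]
    have hgh_norm : ‖g - h‖ ≤ 1 + δ := by
      calc ‖g - h‖ ≤ ‖g‖ + ‖h‖ := norm_sub_le _ _
        _ ≤ 1 + δ := add_le_add hgnorm hhδ.le
    obtain ⟨c, hc⟩ : ∃ c : ℝ, c = (1+δ)⁻¹ := ⟨_, rfl⟩
    have hc0 : 0 < c := by rw [hc]; positivity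
    have hcc : c * (1+δ) = 1 := by rw [hc]; field_simp
    have hc1 : c ≤ 1 := by nlinarith
    have h1c : 1 - c ≤ δ := by nlinarith
    obtain ⟨f, hf⟩ : ∃ f : StrongDual ℝ X, f = c • (g - h) := ⟨_, rfl⟩
    have hfF : f ∈ annih Y := hf ▸ (annih Y).smul_mem c hgh_mem
    have hfn : ‖f‖ ≤ 1 := by
      rw [hf, norm_smul, Real.norm_eq_abs, abs_of_pos hc0]
      calc c * ‖g - h‖ ≤ c * (1+δ) := mul_le_mul_of_nonneg_left hgh_norm hc0.le
        _ = 1 := hcc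
    have hgf : ‖g - f‖ ≤ 2*δ := by
      have heq : g - f = (1 - c) • g + c • h := by
        rw [hf]; module
      rw [heq]
      calc ‖(1-c) • g + c • h‖ ≤ ‖(1-c) • g‖ + ‖c • h‖ := norm_add_le _ _
        _ = (1-c)*‖g‖ + c*‖h‖ := by
            have n1 : ‖(1-c) • g‖ = (1-c) * ‖g‖ := by
              rw [norm_smul, Real.norm_eq_abs, abs_of_nonneg (by linarith : (0:ℝ) ≤ 1 - c)]
            have n2 : ‖c • h‖ = c * ‖h‖ := by
              have t : ‖c • h‖ = ‖c‖ * ‖h‖ := norm_smul c h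
              rw [Real.norm_eq_abs, abs_of_pos hc0] at t
              exact t
            rw [n1, n2]
        _ ≤ δ * 1 + 1 * δ := by
            have e1 : (1-c)*‖g‖ ≤ δ * 1 := by
              apply mul_le_mul h1c hgnorm (norm_nonneg g) hδpos.le
            have e2 : c*‖h‖ ≤ 1 * δ := by
              apply mul_le_mul hc1 hhδ.le (norm_nonneg h) one_pos.le
            linarith
        _ = 2*δ := by ring
    refine ⟨f, ?_, hgf⟩
    rw [hVeq]
    refine ⟨⟨hfF, hfn⟩, ?_⟩
    apply hball
    refine (Seminorm.mem_ball _).mpr ?_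
    apply Seminorm.finset_sup_apply_lt hr
    intro x hx
    erw [LinearMap.toSeminormFamily_apply]
    have hgx : ‖g x - f₀ x‖ < r/2 := by
      have := Set.mem_iInter₂.mp hgB x hx
      exact this
    have hfgx : ‖f x - g x‖ ≤ r/2 := by
      calc ‖f x - g x‖ = ‖(f - g) x‖ := by rw [ContinuousLinearMap.sub_apply]
        _ ≤ ‖f - g‖ * ‖x‖ := (f - g).le_opNorm x
        _ ≤ (2*δ) * M := by
            rw [norm_sub_rev]
            exact mul_le_mul hgf (hxM x hx) (norm_nonneg x) (by linarith)
        _ ≤ r/2 := by linarith [hδr]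
    show ‖f x - f₀ x‖ < r
    calc ‖f x - f₀ x‖ = ‖(f x - g x) + (g x - f₀ x)‖ := by rw [sub_add_sub_cancel]
      _ ≤ ‖f x - g x‖ + ‖g x - f₀ x‖ := norm_add_le _ _
      _ < r/2 + r/2 := by linarith
      _ = r := by ring
  refine ⟨W, ⟨U, hUopen, rfl⟩, ⟨f₀, ?_, ?_, ?_⟩, ?_⟩
  · exact mem_closedBall_zero_iff.mpr hf₀n
  · show ‖restrL Y f₀‖ < δ
    have : restrL Y f₀ = 0 := by
      ext y
      simpa [restrL_apply] using hf₀F (y : X) y.2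
    rw [this, norm_zero (E := StrongDual ℝ Y)]; exact hδpos
  · refine Set.mem_iInter₂.mpr fun x _ => ?_
    show ‖(StrongDual.toWeakDual f₀) x - f₀ x‖ < r/2
    have hz : (StrongDual.toWeakDual f₀) x - f₀ x = 0 := sub_eq_zero.mpr rfl
    rw [hz, norm_zero]; linarith
  · have hVbd : Bornology.IsBounded V := by
      apply (Metric.isBounded_closedBall (x := (0:StrongDual ℝ X)) (r := 1)).subset
      rw [hVeq]
      rintro f ⟨⟨-, hfn⟩, -⟩
      exact mem_closedBall_zero_iff.mpr hfn
    have hdV : (0:ℝ) ≤ diam V := Metric.diam_nonneg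
    have hbound : diam W ≤ 4*δ + diam V := by
      apply Metric.diam_le_of_forall_dist_le (by linarith)
      intro g hg g' hg'
      obtain ⟨f, hfV, hgf⟩ := key g hg
      obtain ⟨f', hf'V, hgf'⟩ := key g' hg'
      have h2 : dist f f' ≤ diam V := Metric.dist_le_diam_of_mem hVbd hfV hf'V
      have h3 : dist g f = ‖g - f‖ := dist_eq_norm g f
      have h4 : dist f' g' = ‖g' - f'‖ := by rw [dist_eq_norm, norm_sub_rev]
      calc dist g g' ≤ dist g f + dist f f' + dist f' g' := dist_triangle4 g f f' g'
        _ ≤ 2*δ + diam V + 2*δ := by rw [h3, h4]; linarith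
        _ = 4*δ + diam V := by ring
    calc diam W ≤ 4*δ + diam V := hbound
      _ < ε := by linarith
end
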